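/- arXiv:2509.09312 — 12 statements merged into one kernel-verified Lean document; each statement's English description precedes it below -/
import Mathlib

section
/- Let G = (C, E) be a complete tournament and let w ∈ TC(G) be a top-cycle winner of G. Then every minimal support X for w ∈ TC(G) is a w-rooted out-tree: for every candidate c ≠ w there exists a unique directed path from w to c in X. -/
/-- `E` is the edge set of a complete (unweighted) tournament on `C`:
asymmetric and total on distinct candidates. -/
def IsCompleteT {C : Type*} (E : Finset (C × C)) : Prop :=
  (∀ x y : C, (x, y) ∈ E → (y, x) ∉ E) ∧
  (∀ x y : C, x ≠ y → (x, y) ∈ E ∨ (y, x) ∈ E)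

/-- Reachability along directed edges of `E`. -/
def Reach {C : Type*} (E : Finset (C × C)) (a b : C) : Prop :=
  Relation.ReflTransGen (fun x y => (x, y) ∈ E) a b

/-- Membership in the top cycle: `c` reaches every other candidate via a directed path. -/
def InTC {C : Type*} (E : Finset (C × C)) (c : C) : Prop :=
  ∀ c' : C, Reach E c c'

/-- `w` is a necessary winner of TC in the partial tournament `X`:
`w` is in the top cycle of every completion of `X`. -/
def NWTC {C : Type*} (X : Finset (C × C)) (w : C) : Prop :=
  ∀ E' : Finset (C × C), X ⊆ E' → IsCompleteT E' → InTC E' w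

/-- `X` is a minimal support for `w ∈ TC(G)`. -/
def MSTC {C : Type*} (G X : Finset (C × C)) (w : C) : Prop :=
  X ⊆ G ∧ NWTC X w ∧ ∀ Y : Finset (C × C), Y ⊂ X → ¬ NWTC Y w

/-- `l` is a directed path from `a` to `b` along edges of `E`
(a list of pairwise distinct vertices, consecutive ones joined by edges). -/
def IsDiPath {C : Type*} (E : Finset (C × C)) (a b : C) (l : List C) : Prop :=
  l.Nodup ∧ l.Chain' (fun x y => (x, y) ∈ E) ∧ l.head? = some a ∧ l.getLast? = some b

/- ---------------- Auxiliary development ---------------- -/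

namespace MSTCAux

open scoped Classical

variable {C : Type*}

/-- `ChainN X w n v`: there is a directed walk of length `n` from `w` to `v` in `X`. -/
def ChainN (X : Finset (C × C)) (w : C) : ℕ → C → Prop
  | 0, v => v = w
  | n+1, v => ∃ u, ChainN X w n u ∧ (u, v) ∈ X

lemma reach_iff_chainN (X : Finset (C × C)) (w v : C) :
    Reach X w v ↔ ∃ n, ChainN X w n v := by
  constructor
  · intro h
    induction h with
    | refl => exact ⟨0, rfl⟩
    | tail _ hbc ih => exact ⟨ih.choose + 1, _, ih.choose_spec, hbc⟩
  · rintro ⟨n, hn⟩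
    induction n generalizing v with
    | zero => cases hn; exact Relation.ReflTransGen.refl
    | succ n ih =>
      obtain ⟨u, hu, huv⟩ := hn
      exact Relation.ReflTransGen.tail (ih u hu) huv

variable (X : Finset (C × C)) (w : C) (h : ∀ v : C, ∃ n, ChainN X w n v)

/-- The minimal walk length from `w` to `v`. -/
noncomputable def dX (v : C) : ℕ := Nat.find (h v)

lemma chainN_dX (v : C) : ChainN X w (dX X w h v) v := Nat.find_spec (h v)

lemma dX_le {n : ℕ} {v : C} (hn : ChainN X w n v) : dX X w h v ≤ n :=
  Nat.find_min' (h v) hn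

lemma dX_eq_zero_iff (v : C) : dX X w h v = 0 ↔ v = w := by
  constructor
  · intro h0
    have := chainN_dX X w h v
    rw [h0] at this
    exact this
  · intro hvw
    exact Nat.le_zero.mp (dX_le X w h (show ChainN X w 0 v from hvw))

lemma par_aux {v : C} (hv : v ≠ w) :
    ∃ u, ChainN X w (dX X w h v - 1) u ∧ (u, v) ∈ X := by
  have hs := chainN_dX X w h v
  have hd : dX X w h v ≠ 0 := fun h0 => hv ((dX_eq_zero_iff X w h v).mp h0)
  obtain ⟨m, hm⟩ := Nat.exists_eq_succ_of_ne_zero hd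
  rw [hm] at hs ⊢
  simpa [ChainN] using hs

/-- The parent of `v ≠ w`: the penultimate vertex of a shortest walk from `w` to `v`. -/
noncomputable def par (v : C) : C :=
  if hv : v = w then w else Classical.choose (par_aux X w h hv)

lemma par_edge {v : C} (hv : v ≠ w) : (par X w h v, v) ∈ X := by
  rw [par, dif_neg hv]
  exact (Classical.choose_spec (par_aux X w h hv)).2

lemma dX_par_lt {v : C} (hv : v ≠ w) : dX X w h (par X w h v) < dX X w h v := by
  have h1 : dX X w h (par X w h v) ≤ dX X w h v - 1 := by
    rw [par, dif_neg hv]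
    exact dX_le X w h (Classical.choose_spec (par_aux X w h hv)).1
  have hd : dX X w h v ≠ 0 := fun h0 => hv ((dX_eq_zero_iff X w h v).mp h0)
  omega

/-- The canonical path from `w` to `v` following parents. -/
noncomputable def pathX (v : C) : List C :=
  if hv : v = w then [w] else pathX (par X w h v) ++ [v]
termination_by dX X w h v
decreasing_by exact dX_par_lt X w h hv

lemma pathX_spec (v : C) :
    IsDiPath X w v (pathX X w h v) ∧ ∀ u ∈ pathX X w h v, dX X w h u ≤ dX X w h v := by
  by_cases hv : v = w
  · subst hv
    rw [pathX, dif_pos rfl]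
    refine ⟨⟨by simp, List.isChain_singleton _, rfl, rfl⟩, ?_⟩
    intro u hu
    simp only [List.mem_singleton] at hu
    subst hu; exact le_rfl
  · have ih := pathX_spec (par X w h v)
    obtain ⟨⟨hnd, hch, hhd, hlast⟩, hdle⟩ := ih
    have hlt := dX_par_lt X w h hv
    have hne : pathX X w h (par X w h v) ≠ [] := by
      intro hnil; rw [hnil] at hhd; simp at hhd
    rw [pathX, dif_neg hv]
    constructor
    · refine ⟨?_, ?_, ?_, List.getLast?_concat⟩
      · rw [List.nodup_append]
        refine ⟨hnd, by simp, ?_⟩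
        intro u hu b hb heq
        simp only [List.mem_singleton] at hb
        rw [hb] at heq
        rw [heq] at hu
        exact absurd (hdle v hu) (by omega)
      · rw [List.Chain', List.isChain_append]
        refine ⟨hch, List.isChain_singleton _, ?_⟩
        intro x hx y hy
        simp only [List.head?_cons, Option.mem_some_iff] at hy
        rw [hlast] at hx
        simp only [Option.mem_some_iff] at hx
        subst hx; subst hy
        exact par_edge X w h hv
      · rw [List.head?_append_of_ne_nil _ hne, hhd]
    · intro u hu
      rcases List.mem_append.mp hu with hu | hu
      · exact le_of_lt (lt_of_le_of_lt (hdle u hu) hlt)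
      · simp only [List.mem_singleton] at hu; subst hu; exact le_rfl
termination_by dX X w h v
decreasing_by exact dX_par_lt X w h hv

lemma pathX_unique
    (hEdge : ∀ a b : C, (a, b) ∈ X → b ≠ w ∧ a = par X w h b) :
    ∀ (l : List C) (v : C), IsDiPath X w v l → l = pathX X w h v := by
  suffices key : ∀ (n : ℕ) (l : List C) (v : C), l.length = n →
      IsDiPath X w v l → l = pathX X w h v by
    intro l v hl
    exact key l.length l v rfl hl
  intro n
  induction n using Nat.strong_induction_on with
  | _ n ih =>
    intro l v hlen ⟨hnd, hch, hhd, hlast⟩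
    by_cases hv : v = w
    · -- l is a nodup path from w to w, hence [w]
      rw [pathX, dif_pos hv]
      cases l with
      | nil => simp at hhd
      | cons a t =>
        have ha : a = w := by simpa using hhd
        cases t with
        | nil => simp [ha]
        | cons b t' =>
          exfalso
          rw [List.getLast?_cons_cons] at hlast
          have hmem : v ∈ b :: t' := List.mem_of_getLast? hlast
          rw [hv, ← ha] at hmem
          exact (List.nodup_cons.mp hnd).1 hmem
    · -- l ends in v; peel it off
      have hlnil : l ≠ [] := by
        intro hnil; rw [hnil] at hhd; simp at hhd
      have hdecomp : l = l.dropLast ++ [l.getLast hlnil] := (List.dropLast_append_getLast hlnil).symm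
      have hgl : l.getLast hlnil = v := by
        have := List.getLast_mem_getLast? hlnil
        rw [hlast] at this
        have h2 : v = l.getLast hlnil := by simpa [Option.mem_def] using this
        exact h2.symm
      set l' := l.dropLast with hl'
      have hdecomp' : l = l' ++ [v] := by rw [hdecomp, hgl]
      have hl'ne : l' ≠ [] := by
        intro hnil
        rw [hdecomp', hnil, List.nil_append] at hhd
        simp only [List.head?_cons, Option.some_inj] at hhd
        exact hv hhd
      rw [hdecomp'] at hnd hch hhd hlast
      rw [List.Chain', List.isChain_append] at hch
      obtain ⟨hch', -, hlink⟩ := hch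
      -- the last element of l' is an in-neighbor of v, hence = par v
      obtain ⟨b, hb⟩ : ∃ b, l'.getLast? = some b := by
        cases hx : l'.getLast? with
        | none => exact absurd (List.getLast?_eq_none_iff.mp hx) hl'ne
        | some b => exact ⟨b, rfl⟩
      have hbv : (b, v) ∈ X := hlink b (by rw [hb]; exact rfl) v rfl
      have hbpar : b = par X w h v := (hEdge b v hbv).2
      have hnd' : l'.Nodup := (List.nodup_append.mp hnd).1
      have hhd' : l'.head? = some w := by
        rw [List.head?_append_of_ne_nil _ hl'ne] at hhd; exact hhd
      have hlast' : l'.getLast? = some (par X w h v) := by rw [hb, hbpar]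
      have hltlen : l'.length < n := by
        rw [← hlen, hdecomp']
        simp [hl']
      have := ih l'.length hltlen l' (par X w h v) rfl ⟨hnd', hch', hhd', hlast'⟩
      rw [hdecomp', this]
      conv_rhs => rw [pathX]
      rw [dif_neg hv]

end MSTCAux

open MSTCAux in
/-- Every minimal support for a top-cycle winner `w` is a `w`-rooted out-tree:
for every candidate `c ≠ w` there is a unique directed path from `w` to `c`. -/
theorem stmt0 {C : Type*} [Fintype C] [DecidableEq C] [Nonempty C]
    (G : Finset (C × C)) (hG : IsCompleteT G) (w : C) (hw : InTC G w)
    (X : Finset (C × C)) (hX : MSTC G X w) :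
    ∀ c : C, c ≠ w → ∃! l : List C, IsDiPath X w c l := by
  classical
  obtain ⟨hXG, hNW, hmin⟩ := hX
  have hXasym : ∀ u v : C, (u, v) ∈ X → (v, u) ∉ X :=
    fun u v hu hv => hG.1 u v (hXG hu) (hXG hv)
  have hXirr : ∀ u : C, (u, u) ∉ X := fun u hu => hG.1 u u (hXG hu) (hXG hu)
  -- Step 1: w reaches every candidate already in X.
  have hReach : ∀ v : C, Reach X w v := by
    by_contra hc
    push_neg at hc
    obtain ⟨c, hcnr⟩ := hc
    set A : C → Prop := fun v => Reach X w v with hA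
    -- completion that orients all free edges towards the reachable set
    set R : C → C → Prop := fun u v => (¬(A u ∧ ¬ A v)) ∧ ((A v ∧ ¬ A u) ∨ (u, v) ∈ G) with hR
    set E' : Finset (C × C) :=
      Finset.univ.filter (fun p => p.1 ≠ p.2 ∧ ((p.1, p.2) ∈ X ∨ ((p.2, p.1) ∉ X ∧ R p.1 p.2)))
      with hE'
    have hmemE' : ∀ u v : C, (u, v) ∈ E' ↔
        u ≠ v ∧ ((u, v) ∈ X ∨ ((v, u) ∉ X ∧ R u v)) := by
      intro u v; simp [hE']
    have hXE' : X ⊆ E' := by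
      intro p hp
      obtain ⟨u, v⟩ := p
      rw [hmemE']
      refine ⟨?_, Or.inl hp⟩
      rintro rfl; exact hXirr u hp
    have hcomp : IsCompleteT E' := by
      constructor
      · intro u v huv hvu
        rw [hmemE'] at huv hvu
        obtain ⟨hne, huv⟩ := huv
        obtain ⟨-, hvu⟩ := hvu
        rcases huv with huv | ⟨hnvu, hRuv⟩
        · rcases hvu with hvu | ⟨hnuv, -⟩
          · exact hXasym u v huv hvu
          · exact hnuv huv
        · rcases hvu with hvu | ⟨-, hRvu⟩
          · exact hnvu hvu
          · -- R u v and R v u both hold: contradiction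
            by_cases hAu : A u <;> by_cases hAv : A v
            · exact hG.1 u v (hRuv.2.resolve_left (by tauto)) (hRvu.2.resolve_left (by tauto))
            · exact hRuv.1 ⟨hAu, hAv⟩
            · exact hRvu.1 ⟨hAv, hAu⟩
            · exact hG.1 u v (hRuv.2.resolve_left (by tauto)) (hRvu.2.resolve_left (by tauto))
      · intro u v hne
        by_cases huv : (u, v) ∈ X
        · exact Or.inl ((hmemE' u v).mpr ⟨hne, Or.inl huv⟩)
        by_cases hvu : (v, u) ∈ X
        · exact Or.inr ((hmemE' v u).mpr ⟨hne.symm, Or.inl hvu⟩)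
        by_cases hAu : A u <;> by_cases hAv : A v
        · rcases hG.2 u v hne with hg | hg
          · exact Or.inl ((hmemE' u v).mpr ⟨hne, Or.inr ⟨hvu, by tauto, Or.inr hg⟩⟩)
          · exact Or.inr ((hmemE' v u).mpr ⟨hne.symm, Or.inr ⟨huv, by tauto, Or.inr hg⟩⟩)
        · exact Or.inr ((hmemE' v u).mpr ⟨hne.symm, Or.inr ⟨huv, by tauto, Or.inl ⟨hAu, hAv⟩⟩⟩)
        · exact Or.inl ((hmemE' u v).mpr ⟨hne, Or.inr ⟨hvu, by tauto, Or.inl ⟨hAv, hAu⟩⟩⟩)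
        · rcases hG.2 u v hne with hg | hg
          · exact Or.inl ((hmemE' u v).mpr ⟨hne, Or.inr ⟨hvu, by tauto, Or.inr hg⟩⟩)
          · exact Or.inr ((hmemE' v u).mpr ⟨hne.symm, Or.inr ⟨huv, by tauto, Or.inr hg⟩⟩)
    have hwE' : InTC E' w := hNW E' hXE' hcomp
    -- but any E'-step preserves A, so w cannot reach c in E'
    have hstep : ∀ u v : C, (u, v) ∈ E' → A u → A v := by
      intro u v huv hAu
      rw [hmemE'] at huv
      rcases huv.2 with huv | ⟨-, hRuv⟩
      · exact Relation.ReflTransGen.tail hAu huv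
      · by_contra hAv
        exact hRuv.1 ⟨hAu, hAv⟩
    have hAc : A c := by
      have hr := hwE' c
      have : ∀ b : C, Relation.ReflTransGen (fun x y => (x, y) ∈ E') w b → A b := by
        intro b hb
        induction hb with
        | refl => exact Relation.ReflTransGen.refl
        | tail _ hbc ih => exact hstep _ _ hbc ih
      exact this c hr
    exact hcnr hAc
  have hAll : ∀ v : C, ∃ n, ChainN X w n v :=
    fun v => (reach_iff_chainN X w v).mp (hReach v)
  -- Step 2: the parent edges form a sub-support, hence equal X by minimality.
  set T : Finset (C × C) :=
    (Finset.univ.filter (fun v : C => v ≠ w)).image (fun v => (par X w hAll v, v)) with hT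
  have hTX : T ⊆ X := by
    intro p hp
    rw [hT, Finset.mem_image] at hp
    obtain ⟨v, hv, rfl⟩ := hp
    rw [Finset.mem_filter] at hv
    exact par_edge X w hAll hv.2
  have hTreach : ∀ v : C, Reach T w v := by
    intro v
    -- strong induction on dX
    have key : ∀ n : ℕ, ∀ v : C, dX X w hAll v = n → Reach T w v := by
      intro n
      induction n using Nat.strong_induction_on with
      | _ n ih =>
        intro v hdv
        by_cases hv : v = w
        · subst hv; exact Relation.ReflTransGen.refl
        · have hlt := dX_par_lt X w hAll hv
          rw [hdv] at hlt
          have hr : Reach T w (par X w hAll v) := ih _ hlt _ rfl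
          refine Relation.ReflTransGen.tail hr ?_
          rw [hT, Finset.mem_image]
          exact ⟨v, Finset.mem_filter.mpr ⟨Finset.mem_univ v, hv⟩, rfl⟩
    exact key _ v rfl
  have hTNW : NWTC T w := by
    intro E' hTE' _
    intro v
    exact Relation.ReflTransGen.mono (fun x y hxy => hTE' hxy) _ _ (hTreach v)
  have hTXeq : T = X := by
    by_contra hne
    exact hmin T (lt_of_le_of_ne hTX hne) hTNW
  -- Step 3: edge characterization
  have hEdge : ∀ a b : C, (a, b) ∈ X → b ≠ w ∧ a = par X w hAll b := by
    intro a b hab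
    rw [← hTXeq, hT, Finset.mem_image] at hab
    obtain ⟨v, hv, heq⟩ := hab
    rw [Finset.mem_filter] at hv
    have h1 : par X w hAll v = a := congrArg Prod.fst heq
    have h2 : v = b := congrArg Prod.snd heq
    exact ⟨h2 ▸ hv.2, h2 ▸ h1.symm⟩
  -- Conclusion
  intro c _
  refine ⟨pathX X w hAll c, (pathX_spec X w hAll c).1, ?_⟩
  intro l hl
  exact pathX_unique X w hAll hEdge l c hl
end

section
/- Let G = (C, E) be a complete tournament with |C| = m candidates and let w ∈ TC(G) be a top-cycle winner of G. Then every minimal support X for w ∈ TC(G) has exactly m − 1 edges. -/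
lemma reach_mono {C : Type*} {X Y : Finset (C × C)} (h : X ⊆ Y) {a b : C}
    (hr : Reach X a b) : Reach Y a b := by
  induction hr with
  | refl => exact Relation.ReflTransGen.refl
  | tail _ e ih => exact Relation.ReflTransGen.tail ih (h e)

/-- Easy direction: if `w` reaches everyone via `X`, it is a necessary TC winner. -/
lemma reach_nw {C : Type*} {X : Finset (C × C)} {w : C}
    (hreach : ∀ c, Reach X w c) : NWTC X w :=
  fun _ hsub _ c => reach_mono hsub (hreach c)

/-- Hard direction: if `w` is a necessary TC winner of `X` (with `X` part of a
complete tournament `G`), then `w` reaches everyone via `X`-edges. -/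
lemma nw_reach {C : Type*} [Fintype C] [DecidableEq C] {G X : Finset (C × C)}
    (hG : IsCompleteT G) (hXG : X ⊆ G) {w : C} (hN : NWTC X w) :
    ∀ c, Reach X w c := by
  classical
  let pref : C → C → Prop := fun x y =>
    (¬ Reach X w x ∧ Reach X w y) ∨ ((Reach X w x ↔ Reach X w y) ∧ (x, y) ∈ G)
  let E' : Finset (C × C) :=
    (Finset.univ ×ˢ Finset.univ).filter (fun p => p ∈ X ∨ ((p.2, p.1) ∉ X ∧ pref p.1 p.2))
  have hmem : ∀ p : C × C, p ∈ E' ↔ p ∈ X ∨ ((p.2, p.1) ∉ X ∧ pref p.1 p.2) := by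
    intro p; simp [E', Finset.mem_filter, Finset.mem_product]
  have hsub : X ⊆ E' := fun p hp => (hmem p).mpr (Or.inl hp)
  have hasym : ∀ x y : C, (x, y) ∈ E' → (y, x) ∉ E' := by
    intro x y hxy hyx
    rw [hmem] at hxy hyx
    rcases hxy with h1 | ⟨hn1, hp1⟩
    · rcases hyx with h2 | ⟨hn2, _⟩
      · exact hG.1 x y (hXG h1) (hXG h2)
      · exact hn2 h1
    · rcases hyx with h2 | ⟨hn2, hp2⟩
      · exact hn1 h2
      · rcases hp1 with ⟨hnx, hy⟩ | ⟨hiff1, hg1⟩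
        · rcases hp2 with ⟨hny, hx⟩ | ⟨hiff2, hg2⟩
          · exact hnx hx
          · exact hnx (hiff2.mp hy)
        · rcases hp2 with ⟨hny, hx⟩ | ⟨hiff2, hg2⟩
          · exact hny (hiff1.mp hx)
          · exact hG.1 x y hg1 hg2
  have htot : ∀ x y : C, x ≠ y → (x, y) ∈ E' ∨ (y, x) ∈ E' := by
    intro x y hne
    by_cases hx : (x, y) ∈ X
    · exact Or.inl (hsub hx)
    by_cases hy : (y, x) ∈ X
    · exact Or.inr (hsub hy)
    by_cases hRx : Reach X w x <;> by_cases hRy : Reach X w y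
    · rcases hG.2 x y hne with hg | hg
      · exact Or.inl ((hmem _).mpr (Or.inr ⟨hy, Or.inr ⟨by tauto, hg⟩⟩))
      · exact Or.inr ((hmem _).mpr (Or.inr ⟨hx, Or.inr ⟨by tauto, hg⟩⟩))
    · exact Or.inr ((hmem _).mpr (Or.inr ⟨hx, Or.inl ⟨hRy, hRx⟩⟩))
    · exact Or.inl ((hmem _).mpr (Or.inr ⟨hy, Or.inl ⟨hRx, hRy⟩⟩))
    · rcases hG.2 x y hne with hg | hg
      · exact Or.inl ((hmem _).mpr (Or.inr ⟨hy, Or.inr ⟨by tauto, hg⟩⟩))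
      · exact Or.inr ((hmem _).mpr (Or.inr ⟨hx, Or.inr ⟨by tauto, hg⟩⟩))
  have hclose : ∀ b : C, Reach E' w b → Reach X w b := by
    intro b h
    induction h with
    | refl => exact Relation.ReflTransGen.refl
    | tail _ e ih =>
        rw [hmem] at e
        rcases e with hXe | ⟨_, hp⟩
        · exact Relation.ReflTransGen.tail ih hXe
        · rcases hp with ⟨_, hRy⟩ | ⟨hiff, _⟩
          · exact hRy
          · exact hiff.mp ih
  intro c
  exact hclose c (hN E' hsub ⟨hasym, htot⟩ c)

/-- Finding a crossing edge out of a set `S` along a path leaving `S`. -/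
lemma crossing {C : Type*} (X : Finset (C × C)) (S : Finset C) {c : C} (hc : c ∉ S) :
    ∀ {x : C}, Reach X x c → x ∈ S → ∃ a b, a ∈ S ∧ b ∉ S ∧ (a, b) ∈ X := by
  intro x h
  induction h using Relation.ReflTransGen.head_induction_on with
  | refl => intro hx; exact absurd hx hc
  | @head p q e _ ih =>
      intro hp
      by_cases hq : q ∈ S
      · exact ih hq
      · exact ⟨p, q, hp, hq, e⟩

/-- Build a spanning out-arborescence rooted at `w` inside `X`. -/
lemma build {C : Type*} [Fintype C] [DecidableEq C] (X : Finset (C × C)) (w : C)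
    (hreach : ∀ c, Reach X w c) :
    ∀ (n : ℕ) (S : Finset C) (T : Finset (C × C)), (Finset.univ \ S).card = n → w ∈ S →
      T ⊆ X → (∀ p ∈ T, p.2 ∈ S) → (∀ c ∈ S, Reach T w c) → T.card + 1 = S.card →
      ∃ T', T' ⊆ X ∧ (∀ c, Reach T' w c) ∧ T'.card + 1 = Fintype.card C := by
  intro n
  induction n with
  | zero =>
      intro S T hn hw hTX _ hTr hcard
      have hSu : S = Finset.univ :=
        Finset.eq_univ_of_forall (fun c => by
          by_contra hc
          exact absurd (Finset.card_eq_zero.mp hn ▸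
            Finset.mem_sdiff.mpr ⟨Finset.mem_univ c, hc⟩) (Finset.notMem_empty c))
      subst hSu
      exact ⟨T, hTX, fun c => hTr c (Finset.mem_univ c), by
        simpa [Finset.card_univ] using hcard⟩
  | succ n ih =>
      intro S T hn hw hTX hhead hTr hcard
      have hne : (Finset.univ \ S).Nonempty := by
        rw [← Finset.card_pos, hn]; omega
      obtain ⟨c, hcmem⟩ := hne
      have hcS : c ∉ S := (Finset.mem_sdiff.mp hcmem).2
      obtain ⟨a, b, haS, hbS, hab⟩ := crossing X S hcS (hreach c) hw
      have habT : (a, b) ∉ T := fun h => hbS (hhead (a, b) h)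
      refine ih (insert b S) (insert (a, b) T) ?_ (Finset.mem_insert_of_mem hw)
        (Finset.insert_subset hab hTX) ?_ ?_ ?_
      · have h1 : (Finset.univ \ S).card = Fintype.card C - S.card := by
          rw [Finset.card_sdiff_of_subset (Finset.subset_univ S), Finset.card_univ]
        have h2 : (Finset.univ \ insert b S).card
            = Fintype.card C - (insert b S).card := by
          rw [Finset.card_sdiff_of_subset (Finset.subset_univ _), Finset.card_univ]
        have h3 : (insert b S).card = S.card + 1 := Finset.card_insert_of_notMem hbS
        have h4 : (insert b S).card ≤ Fintype.card C := by
          rw [← Finset.card_univ]; exact Finset.card_le_card (Finset.subset_univ _)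
        omega
      · intro p hp
        rcases Finset.mem_insert.mp hp with h | h
        · rw [h]; exact Finset.mem_insert_self b S
        · exact Finset.mem_insert_of_mem (hhead p h)
      · intro c' hc'
        rcases Finset.mem_insert.mp hc' with h | h
        · rw [h]
          exact Relation.ReflTransGen.tail
            (reach_mono (Finset.subset_insert _ _) (hTr a haS))
            (Finset.mem_insert_self (a, b) T)
        · exact reach_mono (Finset.subset_insert _ _) (hTr c' h)
      · rw [Finset.card_insert_of_notMem habT, Finset.card_insert_of_notMem hbS]
        omega

/-- Every minimal support for a top-cycle winner of a complete tournament on `m`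
candidates has exactly `m - 1` edges. -/
theorem stmt1 {C : Type*} [Fintype C] [DecidableEq C] [Nonempty C]
    (m : ℕ) (hm : Fintype.card C = m)
    (G : Finset (C × C)) (hG : IsCompleteT G) (w : C) (hw : InTC G w)
    (X : Finset (C × C)) (hX : MSTC G X w) :
    X.card = m - 1 := by
  obtain ⟨hXG, hN, hmin⟩ := hX
  have hreach : ∀ c, Reach X w c := nw_reach hG hXG hN
  obtain ⟨T, hTX, hTreach, hTcard⟩ := build X w hreach
    (Finset.univ \ {w}).card {w} ∅ rfl (Finset.mem_singleton_self w)
    (Finset.empty_subset X) (fun p hp => absurd hp (Finset.notMem_empty p))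
    (fun c hc => by rw [Finset.mem_singleton.mp hc]; exact Relation.ReflTransGen.refl)
    (by simp)
  have hTeq : T = X := by
    by_contra hne
    exact hmin T (Finset.ssubset_iff_subset_ne.mpr ⟨hTX, hne⟩) (reach_nw hTreach)
  rw [← hTeq]
  omega
end

section
/- Let G = (C, E) be a complete tournament and let w ∈ UC(G) be an uncovered-set winner of G. Then every minimal support X for w ∈ UC(G) is a w-rooted out-tree of depth at most 2: for every candidate c ≠ w there exists a unique directed path from w to c in X, and this path has length at most 2. -/
/-- `a` reaches `b` via a directed path of length at most two. -/
def Reach2 {C : Type*} (E : Finset (C × C)) (a b : C) : Prop :=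
  a = b ∨ (a, b) ∈ E ∨ ∃ z : C, (a, z) ∈ E ∧ (z, b) ∈ E

/-- Membership in the uncovered set: `c` reaches every other candidate via a
directed path of length at most two. -/
def InUC {C : Type*} (E : Finset (C × C)) (c : C) : Prop :=
  ∀ c' : C, Reach2 E c c'

/-- `w` is a necessary winner of UC in the partial tournament `X`. -/
def NWUC {C : Type*} (X : Finset (C × C)) (w : C) : Prop :=
  ∀ E' : Finset (C × C), X ⊆ E' → IsCompleteT E' → InUC E' w

/-- `X` is a minimal support for `w ∈ UC(G)`. -/
def MSUC {C : Type*} (G X : Finset (C × C)) (w : C) : Prop :=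
  X ⊆ G ∧ NWUC X w ∧ ∀ Y : Finset (C × C), Y ⊂ X → ¬ NWUC Y w

/-- Key completion lemma: if `w` is a necessary winner of `X` (asymmetric), then
for every `c ≠ w` the short path witness is already in `X`. -/
lemma exists_witness {C : Type*} [Fintype C] [DecidableEq C]
    (X : Finset (C × C)) (w : C)
    (hloop : ∀ x : C, (x, x) ∉ X)
    (hasym : ∀ x y : C, (x, y) ∈ X → (y, x) ∉ X)
    (hN : NWUC X w) (c : C) (hc : c ≠ w) :
    (w, c) ∈ X ∨ ∃ z : C, (w, z) ∈ X ∧ (z, c) ∈ X := by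
  classical
  by_contra h
  push_neg at h
  obtain ⟨h1, h2⟩ := h
  set f := Fintype.equivFin C with hf
  set Bad : C × C → Prop := fun p =>
    (p.1 = w ∧ (p.2 = c ∨ (w, p.2) ∉ X)) ∨ (p.2 = c ∧ (w, p.1) ∈ X) with hBadDef
  -- not both orientations bad
  have hnb2 : ∀ x y : C, x ≠ y → Bad (x, y) → ¬ Bad (y, x) := by
    intro x y hxy hb hb'
    simp only [hBadDef] at hb hb'
    rcases hb with ⟨hx, _⟩ | ⟨hy, hwx⟩ <;>
      rcases hb' with ⟨hy', _⟩ | ⟨hx', hw'⟩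
    · exact hxy (hx.trans hy'.symm)
    · exact hc (hx'.symm.trans hx)
    · exact hc (hy.symm.trans hy')
    · exact hxy (hx'.trans hy.symm)
  set E' := Finset.univ.filter (fun p : C × C => p.1 ≠ p.2 ∧ (p ∈ X ∨
    ((p.2, p.1) ∉ X ∧ ¬ Bad p ∧ (Bad (p.2, p.1) ∨ f p.1 < f p.2)))) with hE'
  have hmem : ∀ p : C × C, p ∈ E' ↔ p.1 ≠ p.2 ∧ (p ∈ X ∨
      ((p.2, p.1) ∉ X ∧ ¬ Bad p ∧ (Bad (p.2, p.1) ∨ f p.1 < f p.2))) := by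
    intro p; simp [hE']
  have hsub : X ⊆ E' := by
    rintro ⟨x, y⟩ hp
    refine (hmem _).mpr ⟨?_, Or.inl hp⟩
    intro he
    dsimp only at he
    subst he
    exact hloop x hp
  have hcomp : IsCompleteT E' := by
    constructor
    · intro x y hxy hyx
      obtain ⟨hne, hxy⟩ := (hmem _).mp hxy
      obtain ⟨-, hyx⟩ := (hmem _).mp hyx
      rcases hxy with hxy | ⟨hnyx, hnbxy, horxy⟩
      · rcases hyx with hyx | ⟨hnxy, _⟩
        · exact hasym x y hxy hyx
        · exact hnxy hxy
      · rcases hyx with hyx | ⟨hnxy, hnbyx, horyx⟩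
        · exact hnyx hyx
        · rcases horxy with hb | hlt
          · exact hnbyx hb
          · rcases horyx with hb | hlt'
            · exact hnbxy hb
            · exact absurd hlt' (not_lt.mpr hlt.le)
    · intro x y hne
      by_cases hxy : (x, y) ∈ X
      · exact Or.inl (hsub hxy)
      by_cases hyx : (y, x) ∈ X
      · exact Or.inr (hsub hyx)
      by_cases hb : Bad (x, y)
      · refine Or.inr ((hmem _).mpr ⟨hne.symm, Or.inr ⟨hxy, hnb2 x y hne hb, Or.inl hb⟩⟩)
      · by_cases hb' : Bad (y, x)
        · exact Or.inl ((hmem _).mpr ⟨hne, Or.inr ⟨hyx, hb, Or.inl hb'⟩⟩)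
        · have hfne : f x ≠ f y := fun hh => hne (f.injective hh)
          rcases hfne.lt_or_gt with hlt | hlt
          · exact Or.inl ((hmem _).mpr ⟨hne, Or.inr ⟨hyx, hb, Or.inr hlt⟩⟩)
          · exact Or.inr ((hmem _).mpr ⟨hne.symm, Or.inr ⟨hxy, hb', Or.inr hlt⟩⟩)
  rcases hN E' hsub hcomp c with heq | hwc | ⟨z, hz1, hz2⟩
  · exact hc heq.symm
  · obtain ⟨-, hwc⟩ := (hmem _).mp hwc
    rcases hwc with hwc | ⟨-, hnb, -⟩
    · exact h1 hwc
    · exact hnb (Or.inl ⟨rfl, Or.inl rfl⟩)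
  · by_cases hwz : (w, z) ∈ X
    · obtain ⟨-, hzc⟩ := (hmem _).mp hz2
      rcases hzc with hzc | ⟨-, hnb, -⟩
      · exact h2 z hwz hzc
      · exact hnb (Or.inr ⟨rfl, hwz⟩)
    · obtain ⟨-, hwz'⟩ := (hmem _).mp hz1
      rcases hwz' with hwz' | ⟨-, hnb, -⟩
      · exact hwz hwz'
      · exact hnb (Or.inl ⟨rfl, Or.inr hwz⟩)

/-- Minimality master lemma: every edge of `X` must appear in the witness set
determined by any choice function `f` of short witnesses. -/
lemma edge_shape {C : Type*} [Fintype C] [DecidableEq C]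
    (X : Finset (C × C)) (w : C)
    (hmin : ∀ Y : Finset (C × C), Y ⊂ X → ¬ NWUC Y w) (hN : NWUC X w)
    (f : C → Option C)
    (hf : ∀ c : C, c ≠ w → (f c = none ∧ (w, c) ∈ X) ∨
      ∃ z, f c = some z ∧ (w, z) ∈ X ∧ (z, c) ∈ X) :
    ∀ e ∈ X, ∃ c, c ≠ w ∧ ((f c = none ∧ e = (w, c)) ∨
      ∃ z, f c = some z ∧ (e = (w, z) ∨ e = (z, c))) := by
  classical
  set P : C × C → Prop := fun e => ∃ c, c ≠ w ∧ ((f c = none ∧ e = (w, c)) ∨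
      ∃ z, f c = some z ∧ (e = (w, z) ∨ e = (z, c))) with hP
  set T := X.filter P with hT
  have hTsub : T ⊆ X := Finset.filter_subset _ _
  have hTN : NWUC T w := by
    intro E' hsub hcomp c'
    by_cases hc' : c' = w
    · exact Or.inl hc'.symm
    · rcases hf c' hc' with ⟨hn, hwc⟩ | ⟨z, hz, hwz, hzc⟩
      · refine Or.inr (Or.inl (hsub ?_))
        exact Finset.mem_filter.mpr ⟨hwc, ⟨c', hc', Or.inl ⟨hn, rfl⟩⟩⟩
      · refine Or.inr (Or.inr ⟨z, hsub ?_, hsub ?_⟩)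
        · exact Finset.mem_filter.mpr ⟨hwz, ⟨c', hc', Or.inr ⟨z, hz, Or.inl rfl⟩⟩⟩
        · exact Finset.mem_filter.mpr ⟨hzc, ⟨c', hc', Or.inr ⟨z, hz, Or.inr rfl⟩⟩⟩
  have hTX : T = X := by
    by_contra hne
    exact hmin T (lt_of_le_of_ne hTsub hne) hTN
  intro e he
  rw [← hTX] at he
  exact (Finset.mem_filter.mp he).2

/-- Every minimal support for an uncovered-set winner `w` is a `w`-rooted
out-tree of depth at most 2: for every `c ≠ w` there is a unique directed path
from `w` to `c`, and every such path has length at most 2 (at most 3 vertices). -/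
theorem stmt2 {C : Type*} [Fintype C] [DecidableEq C] [Nonempty C]
    (G : Finset (C × C)) (hG : IsCompleteT G) (w : C) (hw : InUC G w)
    (X : Finset (C × C)) (hX : MSUC G X w) :
    ∀ c : C, c ≠ w →
      (∃! l : List C, IsDiPath X w c l) ∧
      (∀ l : List C, IsDiPath X w c l → l.length ≤ 3) := by
  classical
  obtain ⟨hXG, hN, hmin⟩ := hX
  have hasym : ∀ x y : C, (x, y) ∈ X → (y, x) ∉ X :=
    fun x y hxy hyx => hG.1 x y (hXG hxy) (hXG hyx)
  have hloop : ∀ x : C, (x, x) ∉ X := fun x h => hasym x x h h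
  have P1 : ∀ c : C, c ≠ w → (w, c) ∈ X ∨ ∃ z : C, (w, z) ∈ X ∧ (z, c) ∈ X :=
    exists_witness X w hloop hasym hN
  -- default witness choice
  set f0 : C → Option C := fun c =>
    if (w, c) ∈ X then none
    else if h : ∃ z, (w, z) ∈ X ∧ (z, c) ∈ X then some h.choose else none with hf0def
  have hf0 : ∀ c : C, c ≠ w → (f0 c = none ∧ (w, c) ∈ X) ∨
      ∃ z, f0 c = some z ∧ (w, z) ∈ X ∧ (z, c) ∈ X := by
    intro c hc
    by_cases hwc : (w, c) ∈ X
    · exact Or.inl ⟨by simp [hf0def, hwc], hwc⟩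
    · rcases P1 c hc with h | h
      · exact absurd h hwc
      · exact Or.inr ⟨h.choose, by simp [hf0def, hwc, h], h.choose_spec⟩
  have hf0some : ∀ c z : C, f0 c = some z → (w, c) ∉ X ∧ (w, z) ∈ X ∧ (z, c) ∈ X := by
    intro c z hz
    by_cases hwc : (w, c) ∈ X
    · simp [hf0def, hwc] at hz
    · refine ⟨hwc, ?_⟩
      by_cases h : ∃ z', (w, z') ∈ X ∧ (z', c) ∈ X
      · simp only [hf0def, if_neg hwc, dif_pos h] at hz
        obtain rfl : h.choose = z := by injection hz
        exact h.choose_spec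
      · simp [hf0def, hwc, h] at hz
  -- Fact A: every edge not starting at w is the second edge of a 2-path
  have hA : ∀ x y : C, (x, y) ∈ X → x ≠ w → (w, x) ∈ X ∧ y ≠ w ∧ (w, y) ∉ X := by
    intro x y hxy hx
    obtain ⟨c, hc, hcase⟩ := edge_shape X w hmin hN f0 hf0 (x, y) hxy
    rcases hcase with ⟨-, he⟩ | ⟨z, hz, he | he⟩
    · exact absurd (congrArg Prod.fst he) hx
    · exact absurd (congrArg Prod.fst he) hx
    · injection he with h1 h2
      subst h1; subst h2
      obtain ⟨hwc, hwz, -⟩ := hf0some _ _ hz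
      exact ⟨hwz, hc, hwc⟩
  -- Fact B: uniqueness of the non-root predecessor
  have hB : ∀ x x' y : C, (x, y) ∈ X → (x', y) ∈ X → x ≠ w → x' ≠ w → x = x' := by
    intro x x' y hxy hx'y hx hx'
    have hwx : (w, x) ∈ X := (hA x y hxy hx).1
    set f2 : C → Option C := Function.update f0 y (some x) with hf2def
    have hf2 : ∀ c : C, c ≠ w → (f2 c = none ∧ (w, c) ∈ X) ∨
        ∃ z, f2 c = some z ∧ (w, z) ∈ X ∧ (z, c) ∈ X := by
      intro c hc
      by_cases hcy : c = y
      · subst hcy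
        exact Or.inr ⟨x, by simp [hf2def], hwx, hxy⟩
      · rw [hf2def, Function.update_of_ne hcy]
        exact hf0 c hc
    obtain ⟨c, hc, hcase⟩ := edge_shape X w hmin hN f2 hf2 (x', y) hx'y
    rcases hcase with ⟨-, he⟩ | ⟨z, hz, he | he⟩
    · exact absurd (congrArg Prod.fst he) hx'
    · exact absurd (congrArg Prod.fst he) hx'
    · injection he with h1 h2
      subst h1; subst h2
      rw [hf2def, Function.update_self] at hz
      exact Option.some_injective _ hz
  -- structure of any dipath from w to c
  have hPS : ∀ (c : C), c ≠ w → ∀ l : List C, IsDiPath X w c l →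
      (l = [w, c] ∧ (w, c) ∈ X) ∨
      ∃ z, l = [w, z, c] ∧ (w, z) ∈ X ∧ (z, c) ∈ X ∧ z ≠ w ∧ (w, c) ∉ X := by
    intro c hc l hl
    obtain ⟨hnd, hch, hhd, hlast⟩ := hl
    match l with
    | [] => simp at hhd
    | [a] =>
      simp at hhd hlast
      subst hhd
      exact absurd hlast.symm hc
    | [a, b] =>
      simp [List.Chain', List.isChain_cons_cons, List.isChain_singleton] at hhd hlast hch
      subst hhd; subst hlast
      exact Or.inl ⟨rfl, hch⟩
    | [a, b, d] =>
      simp [List.Chain', List.isChain_cons_cons, List.isChain_singleton] at hhd hlast hch hnd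
      subst hhd; subst hlast
      have hbw : b ≠ a := fun h => hnd.1.1 h.symm
      obtain ⟨-, -, hwcn⟩ := hA b d hch.2 hbw
      exact Or.inr ⟨b, rfl, hch.1, hch.2, hbw, hwcn⟩
    | a :: b :: d :: e :: t =>
      exfalso
      simp only [List.Chain', List.isChain_cons_cons] at hch
      simp only [List.nodup_cons, List.mem_cons] at hnd
      simp at hhd
      subst hhd
      have hbw : b ≠ a := fun h => hnd.1 (Or.inl h.symm)
      have hdw : d ≠ a := fun h => hnd.1 (Or.inr (Or.inl h.symm))
      obtain ⟨-, -, hwd⟩ := hA b d hch.2.1 hbw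
      exact hwd (hA d e hch.2.2.1 hdw).1
  -- assemble
  intro c hc
  have huniq : ∀ l : List C, IsDiPath X w c l →
      ((w, c) ∈ X → l = [w, c]) ∧ (∀ z, (w, c) ∉ X → (w, z) ∈ X → (z, c) ∈ X → l = [w, z, c]) := by
    intro l hl
    rcases hPS c hc l hl with ⟨hleq, hwc⟩ | ⟨z, hleq, hwz, hzc, hzw, hwcn⟩
    · constructor
      · intro _; exact hleq
      · intro z hn _ _; exact absurd hwc hn
    · constructor
      · intro hwc; exact absurd hwc hwcn
      · intro z' hn hwz' hz'c
        have hz'w : z' ≠ w := fun h => hn (h ▸ hz'c)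
        rw [hleq, hB z z' c hzc hz'c hzw hz'w]
  constructor
  · by_cases hwc : (w, c) ∈ X
    · refine ⟨[w, c], ⟨?_, ?_, rfl, rfl⟩, fun l hl => (huniq l hl).1 hwc⟩
      · simp [Ne.symm hc]
      · simp [hwc, List.Chain', List.isChain_cons_cons, List.isChain_singleton]
    · obtain ⟨z, hwz, hzc⟩ := (P1 c hc).resolve_left hwc
      have hzw : z ≠ w := fun h => hloop w (h ▸ hwz)
      have hzc' : z ≠ c := fun h => hloop z (h ▸ hzc)
      have hwcne : w ≠ c := Ne.symm hc
      refine ⟨[w, z, c], ⟨?_, ?_, rfl, rfl⟩,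
        fun l hl => (huniq l hl).2 z hwc hwz hzc⟩
      · simp [Ne.symm hzw, hwcne, hzc']
      · simp [hwz, hzc, List.Chain', List.isChain_cons_cons, List.isChain_singleton]
  · intro l hl
    rcases hPS c hc l hl with ⟨hleq, -⟩ | ⟨z, hleq, -⟩
    · simp [hleq]
    · simp [hleq]
end

section
/- Let G = (C, E) be a complete tournament with |C| = m candidates and let w ∈ UC(G) be an uncovered-set winner of G. Then every smallest minimal support X for w ∈ UC(G) has exactly m − 1 edges. -/
/-- `X` is a smallest minimal support for `w ∈ UC(G)`. -/
def SMSUC {C : Type*} (G X : Finset (C × C)) (w : C) : Prop :=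
  MSUC G X w ∧ ∀ Y : Finset (C × C), MSUC G Y w → X.card ≤ Y.card


open Finset

lemma completion_avoid {C : Type*} [Fintype C] [DecidableEq C]
    (X : Finset (C × C)) (hasym : ∀ x y : C, (x,y) ∈ X → (y,x) ∉ X)
    (v : C) (hv : ∀ u : C, (u,v) ∉ X) :
    ∃ E' : Finset (C × C), X ⊆ E' ∧ IsCompleteT E' ∧ ∀ u : C, (u,v) ∉ E' := by
  classical
  set e := Fintype.equivFin C with he
  set r : C → ℕ := fun x => if x = v then 0 else (e x : ℕ) + 1 with hr
  have h0 : r v = 0 := if_pos rfl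
  have hpos : ∀ x : C, x ≠ v → r x = (e x : ℕ) + 1 := fun x hx => if_neg hx
  have hrinj : ∀ x y : C, r x = r y → x = y := by
    intro x y hxy
    by_cases hx : x = v <;> by_cases hy : y = v
    · rw [hx, hy]
    · rw [hx, h0, hpos y hy] at hxy; omega
    · rw [hy, h0, hpos x hx] at hxy; omega
    · rw [hpos x hx, hpos y hy] at hxy
      exact e.injective (Fin.ext (by omega))
  refine ⟨X ∪ univ.filter (fun p => (p.1,p.2) ∉ X ∧ (p.2,p.1) ∉ X ∧ r p.1 < r p.2),
    subset_union_left, ⟨?_, ?_⟩, ?_⟩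
  · intro x y hxy hyx
    simp only [mem_union, mem_filter, mem_univ, true_and] at hxy hyx
    rcases hxy with h1 | ⟨h1, h2, h3⟩ <;> rcases hyx with h4 | ⟨h4, h5, h6⟩
    · exact hasym x y h1 h4
    · exact h5 h1
    · exact h2 h4
    · omega
  · intro x y hne
    by_cases h1 : (x,y) ∈ X
    · exact Or.inl (mem_union_left _ h1)
    by_cases h2 : (y,x) ∈ X
    · exact Or.inr (mem_union_left _ h2)
    have hrne : r x ≠ r y := fun h => hne (hrinj _ _ h)
    rcases lt_or_gt_of_ne hrne with h | h
    · exact Or.inl (mem_union_right _ (by simp [h1, h2, h]))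
    · exact Or.inr (mem_union_right _ (by simp [h1, h2, h]))
  · intro u hu
    simp only [mem_union, mem_filter, mem_univ, true_and] at hu
    rcases hu with h | ⟨_, _, h⟩
    · exact hv u h
    · have : r v = 0 := by simp [hr]
      omega

lemma exists_min_support {C : Type*} [Fintype C] [DecidableEq C]
    (G : Finset (C × C)) (w : C) :
    ∀ X : Finset (C × C), X ⊆ G → NWUC X w →
      ∃ Y : Finset (C × C), (Y ⊆ G ∧ NWUC Y w ∧ ∀ Z : Finset (C × C), Z ⊂ Y → ¬ NWUC Z w)
        ∧ Y.card ≤ X.card := by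
  classical
  intro X
  induction X using Finset.strongInductionOn with
  | _ X ih =>
    intro hXG hNW
    by_cases h : ∀ Z : Finset (C × C), Z ⊂ X → ¬ NWUC Z w
    · exact ⟨X, ⟨hXG, hNW, h⟩, le_refl _⟩
    · push_neg at h
      obtain ⟨Z, hZX, hZNW⟩ := h
      obtain ⟨Y, hY, hYc⟩ := ih Z hZX (hZX.subset.trans hXG) hZNW
      exact ⟨Y, hY, hYc.trans (card_le_card hZX.subset)⟩


/-- Every smallest minimal support for an uncovered-set winner of a complete
tournament on `m` candidates has exactly `m - 1` edges. -/
theorem stmt3 {C : Type*} [Fintype C] [DecidableEq C] [Nonempty C]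
    (m : ℕ) (hm : Fintype.card C = m)
    (G : Finset (C × C)) (hG : IsCompleteT G) (w : C) (hw : InUC G w)
    (X : Finset (C × C)) (hX : SMSUC G X w) :
    X.card = m - 1 := by
  classical
  obtain ⟨⟨hXG, hXNW, _⟩, hXmin⟩ := hX
  have hGirr : ∀ x : C, (x, x) ∉ G := fun x h => hG.1 x x h h
  have hcard : (univ.erase w).card = m - 1 := by
    rw [card_erase_of_mem (mem_univ w), card_univ, hm]
  -- Lower bound: every v ≠ w has an in-edge in X
  have hXasym : ∀ x y : C, (x, y) ∈ X → (y, x) ∉ X :=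
    fun x y h h' => hG.1 x y (hXG h) (hXG h')
  have hin : ∀ v : C, v ≠ w → ∃ u : C, (u, v) ∈ X := by
    intro v hv
    by_contra h
    push_neg at h
    obtain ⟨E', hXE', hE'c, hE'v⟩ := completion_avoid X hXasym v h
    rcases hXNW E' hXE' hE'c v with heq | he | ⟨z, _, he2⟩
    · exact hv heq.symm
    · exact hE'v w he
    · exact hE'v z he2
  have hlow : m - 1 ≤ X.card := by
    set g : C → C × C := fun v => if hv : v = w then (w, w) else ((hin v hv).choose, v)
      with hg
    have hmaps : ∀ v ∈ univ.erase w, g v ∈ X := by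
      intro v hv
      have hv' : v ≠ w := (mem_erase.mp hv).1
      simpa [hg, hv'] using (hin v hv').choose_spec
    have hsnd : ∀ v ∈ univ.erase w, (g v).2 = v := by
      intro v hv
      have hv' : v ≠ w := (mem_erase.mp hv).1
      simp [hg, hv']
    calc m - 1 = (univ.erase w).card := hcard.symm
      _ ≤ X.card := Finset.card_le_card_of_injOn g hmaps (by
        intro a ha b hb hab
        rw [← hsnd a ha, ← hsnd b hb, hab])
  -- Upper bound: construct a support with m - 1 edges
  have hz : ∀ c : C, c ≠ w → (w, c) ∉ G → ∃ z : C, (w, z) ∈ G ∧ (z, c) ∈ G := by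
    intro c hc hcG
    rcases hw c with heq | he | ⟨z, h1, h2⟩
    · exact absurd heq.symm hc
    · exact absurd he hcG
    · exact ⟨z, h1, h2⟩
  choose z hz1 hz2 using hz
  set f : C → C × C := fun c =>
    if h2 : c = w then (w, w) else if h1 : (w, c) ∈ G then (w, c) else (z c h2 h1, c)
    with hf
  have hfsnd : ∀ c : C, c ≠ w → (f c).2 = c := by
    intro c hc
    by_cases h1 : (w, c) ∈ G <;> simp [hf, hc, h1]
  set X' : Finset (C × C) := (univ.erase w).image f with hX'
  have hX'G : X' ⊆ G := by
    intro p hp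
    rw [hX', mem_image] at hp
    obtain ⟨c, hc, rfl⟩ := hp
    have hc' : c ≠ w := (mem_erase.mp hc).1
    by_cases h1 : (w, c) ∈ G
    · simp [hf, hc', h1]
    · simpa [hf, hc', h1] using hz2 c hc' h1
  have hX'card : X'.card = m - 1 := by
    rw [hX', card_image_of_injOn, hcard]
    intro a ha b hb hab
    rw [← hfsnd a (mem_erase.mp ha).1, ← hfsnd b (mem_erase.mp hb).1, hab]
  have hfmem : ∀ c : C, c ≠ w → f c ∈ X' := by
    intro c hc
    rw [hX', mem_image]
    exact ⟨c, mem_erase.mpr ⟨hc, mem_univ c⟩, rfl⟩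
  have hX'NW : NWUC X' w := by
    intro E' hsub hc c
    by_cases hcw : c = w
    · exact Or.inl hcw.symm
    by_cases h1 : (w, c) ∈ G
    · refine Or.inr (Or.inl ?_)
      have : f c = (w, c) := by simp [hf, hcw, h1]
      exact hsub (this ▸ hfmem c hcw)
    · refine Or.inr (Or.inr ⟨z c hcw h1, ?_, ?_⟩)
      · have hzw : z c hcw h1 ≠ w := by
          intro h
          exact hGirr w (h ▸ hz1 c hcw h1)
        have : f (z c hcw h1) = (w, z c hcw h1) := by
          simp [hf, hzw, hz1 c hcw h1]
        exact hsub (this ▸ hfmem _ hzw)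
      · have : f c = (z c hcw h1, c) := by simp [hf, hcw, h1]
        exact hsub (this ▸ hfmem c hcw)
  obtain ⟨Y, hYms, hYc⟩ := exists_min_support G w X' hX'G hX'NW
  have hup : X.card ≤ m - 1 := by
    calc X.card ≤ Y.card := hXmin Y hYms
      _ ≤ X'.card := hYc
      _ = m - 1 := hX'card
  exact le_antisymm hup hlow
end

section
/- Let G = (C, μ) be a complete n-weighted tournament and let w ∈ MM(G) be a maximin winner of G. Then for every minimal support X = (C, μ_X) for w ∈ MM(G), there exists t ≤ ⌈n/2⌉ such that for every candidate c ∈ C \ {w}, μ_X(w, c) ≥ t and there exists a candidate c' ∈ C with μ_X(c', c) ≥ n − t. -/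
/-- `μ` is a partial `n`-weighted tournament on `C`. -/
def IsPartialW {C : Type*} (n : ℕ) (μ : C → C → ℕ) : Prop :=
  (∀ x, μ x x = 0) ∧ ∀ x y : C, x ≠ y → μ x y + μ y x ≤ n

/-- `μ` is a complete `n`-weighted tournament on `C`. -/
def IsCompleteW {C : Type*} (n : ℕ) (μ : C → C → ℕ) : Prop :=
  (∀ x, μ x x = 0) ∧ ∀ x y : C, x ≠ y → μ x y + μ y x = n

/-- `μ'` extends `μ` (pointwise larger weights), i.e. `μ ⊆ μ'`. -/
def ExtW {C : Type*} (μ μ' : C → C → ℕ) : Prop :=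
  ∀ x y : C, μ x y ≤ μ' x y

/-- The size of a partial weighted tournament: total weight of all its edges. -/
def sizeW {C : Type*} [Fintype C] (μ : C → C → ℕ) : ℕ :=
  ∑ x : C, ∑ y : C, μ x y

/-- The maximin score of `c` in `μ`: its worst performance `min_{c' ≠ c} μ(c,c')`. -/
noncomputable def mmScore {C : Type*} (μ : C → C → ℕ) (c : C) : ℕ :=
  sInf {k : ℕ | ∃ c' : C, c' ≠ c ∧ μ c c' = k}

/-- `c` is a maximin winner: its maximin score is maximal. -/
def InMM {C : Type*} (μ : C → C → ℕ) (c : C) : Prop :=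
  ∀ c' : C, mmScore μ c' ≤ mmScore μ c

/-- `w` is a necessary winner of maximin in the partial `n`-weighted tournament `μX`. -/
def NWMM {C : Type*} (n : ℕ) (μX : C → C → ℕ) (w : C) : Prop :=
  ∀ μ' : C → C → ℕ, ExtW μX μ' → IsCompleteW n μ' → InMM μ' w

/-- `μX` is a minimal support for `w ∈ MM(μ)`. -/
def MSMM {C : Type*} (n : ℕ) (μ μX : C → C → ℕ) (w : C) : Prop :=
  ExtW μX μ ∧ NWMM n μX w ∧
    ∀ μY : C → C → ℕ, ExtW μY μX → μY ≠ μX → ¬ NWMM n μY w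

/-- `μX` is a smallest minimal support for `w ∈ MM(μ)`. -/
def SMSMM {C : Type*} [Fintype C] (n : ℕ) (μ μX : C → C → ℕ) (w : C) : Prop :=
  MSMM n μ μX w ∧ ∀ μY : C → C → ℕ, MSMM n μ μY w → sizeW μX ≤ sizeW μY

lemma mmScore_le' {C : Type*} (μ : C → C → ℕ) {c c' : C} (h : c' ≠ c) :
    mmScore μ c ≤ μ c c' := Nat.sInf_le ⟨c', h, rfl⟩

lemma le_mmScore' {C : Type*} (μ : C → C → ℕ) {c : C} {a : ℕ}
    (hne : ∃ c' : C, c' ≠ c) (h : ∀ c' : C, c' ≠ c → a ≤ μ c c') :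
    a ≤ mmScore μ c := by
  obtain ⟨c₁, hc₁⟩ := hne
  refine le_csInf ⟨μ c c₁, c₁, hc₁, rfl⟩ ?_
  rintro b ⟨c', hc', rfl⟩
  exact h c' hc'

/-- For every minimal support `μX` for a maximin winner `w`, there is `t ≤ ⌈n/2⌉`
such that every `c ≠ w` satisfies `μX(w,c) ≥ t` and loses at least `n - t`
pairwise comparisons to some candidate `c'`. -/
theorem stmt7 {C : Type*} [Fintype C] [DecidableEq C] [Nonempty C]
    (n : ℕ) (hn : 0 < n) (μ : C → C → ℕ) (hG : IsCompleteW n μ)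
    (w : C) (hw : InMM μ w) (μX : C → C → ℕ) (hX : MSMM n μ μX w) :
    ∃ t : ℕ, t ≤ (n + 1) / 2 ∧
      ∀ c : C, c ≠ w → t ≤ μX w c ∧ ∃ c' : C, n - t ≤ μX c' c := by
  by_cases hex : ∃ c : C, c ≠ w
  case neg =>
    push_neg at hex
    exact ⟨0, Nat.zero_le _, fun c hc => absurd (hex c) hc⟩
  obtain ⟨c₁, hc₁⟩ := hex
  obtain ⟨hExt, hNW, hMin⟩ := hX
  have hself : ∀ x : C, μX x x = 0 := by
    intro x
    have h1 := hExt x x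
    have h2 := hG.1 x
    omega
  have hsum : ∀ x y : C, x ≠ y → μX x y + μX y x ≤ n := by
    intro x y hxy
    have h1 := hExt x y
    have h2 := hExt y x
    have h3 := hG.2 x y hxy
    omega
  set t := mmScore μX w with ht
  have htle : ∀ c : C, c ≠ w → t ≤ μX w c := fun c hc => mmScore_le' μX hc
  have htn : t ≤ n := by
    have h1 := htle c₁ hc₁
    have h2 := hsum w c₁ (Ne.symm hc₁)
    omega
  have htbound : t ≤ (n + 1) / 2 := by
    by_contra hbig
    push_neg at hbig
    set μY : C → C → ℕ := fun x y => if x = w ∧ y = c₁ then μX w c₁ - 1 else μX x y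
      with hμY
    have hYle : ExtW μY μX := by
      intro x y
      simp only [hμY]
      split
      · next h => rcases h with ⟨rfl, rfl⟩; omega
      · exact le_refl _
    have hwc₁ : 1 ≤ μX w c₁ := by have := htle c₁ hc₁; omega
    have hYne : μY ≠ μX := by
      intro h
      have h2 := congrFun (congrFun h w) c₁
      simp only [hμY, and_self, if_pos] at h2
      omega
    have hYNW : NWMM n μY w := by
      intro μ' hext' hcomp'
      have key : ∀ c' : C, c' ≠ w → (n + 1) / 2 ≤ μ' w c' := by
        intro c' hc'
        have h1 : μX w c' - 1 ≤ μY w c' := by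
          simp only [hμY]
          split
          · next hh => rcases hh with ⟨-, rfl⟩; omega
          · omega
        have h2 := hext' w c'
        have h3 := htle c' hc'
        omega
      have hw' : (n + 1) / 2 ≤ mmScore μ' w := le_mmScore' μ' ⟨c₁, hc₁⟩ key
      intro c'
      by_cases hc' : c' = w
      · subst hc'; exact le_refl _
      · have h1 : mmScore μ' c' ≤ μ' c' w := mmScore_le' μ' (Ne.symm hc')
        have h2 := hcomp'.2 c' w hc'
        have h3 := key c' hc'
        omega
    exact hMin μY hYle hYne hYNW
  refine ⟨t, htbound, ?_⟩
  intro c hc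
  refine ⟨htle c hc, ?_⟩
  by_contra hno
  push_neg at hno
  have hnt : 0 < n - t := by
    have := hno c
    rw [hself c] at this
    omega
  let f : C → ℕ := fun x => ((Fintype.equivFin C) x : ℕ)
  have hf : Function.Injective f := fun a b h =>
    (Fintype.equivFin C).injective (Fin.val_injective h)
  set μ' : C → C → ℕ := fun x y =>
    if x = y then 0
    else if y = c then μX x c
    else if x = c then n - μX y c
    else if x = w then μX w y
    else if y = w then n - μX w x
    else if f x < f y then μX x y
    else n - μX y x with hμ'
  have hext : ExtW μX μ' := by
    intro x y
    simp only [hμ']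
    by_cases hxy : x = y
    · subst hxy; simp [hself]
    · rw [if_neg hxy]
      have H1 := hsum x y hxy
      split_ifs <;> subst_vars <;> omega
  have hcomp : IsCompleteW n μ' := by
    constructor
    · intro x; simp [hμ']
    · intro x y hxy
      simp only [hμ']
      rw [if_neg hxy, if_neg (Ne.symm hxy)]
      have H1 := hsum x y hxy
      have H3 : f x ≠ f y := fun h => hxy (hf h)
      split_ifs <;> subst_vars <;> omega
  have hInMM := hNW μ' hext hcomp
  have hSne : {k : ℕ | ∃ c' : C, c' ≠ w ∧ μX w c' = k}.Nonempty :=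
    ⟨μX w c₁, c₁, hc₁, rfl⟩
  obtain ⟨c₀, hc₀w, hc₀⟩ := Nat.sInf_mem hSne
  have hc₀t : μX w c₀ = t := hc₀
  have hwc₀ : μ' w c₀ = t := by
    simp only [hμ']
    rw [if_neg (Ne.symm hc₀w)]
    by_cases h : c₀ = c
    · subst h; rw [if_pos rfl]; exact hc₀t
    · rw [if_neg h, if_neg (Ne.symm hc)]; simp [hc₀t]
  have h1 : mmScore μ' w ≤ t := hwc₀ ▸ mmScore_le' μ' hc₀w
  have h2 : t + 1 ≤ mmScore μ' c := by
    refine le_mmScore' μ' ⟨w, Ne.symm hc⟩ ?_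
    intro c' hc'
    have hcc' : μ' c c' = n - μX c' c := by
      simp only [hμ']
      rw [if_neg (Ne.symm hc'), if_neg hc']
      simp
    have h4 := hno c'
    omega
  have h3 := hInMM c
  omega
end

section
/- Let G = (C, μ) be a complete n-weighted tournament with |C| = m candidates and let w ∈ MM(G) be a maximin winner of G. Then every smallest minimal support X for w ∈ MM(G) satisfies ⌈n/2⌉ · (m − 1) ≤ |X| ≤ n(m − 1). -/
/- ------------------ auxiliary material ------------------ -/

lemma sizeW_lt_of_ne {C : Type*} [Fintype C] {a b : C → C → ℕ}
    (h : ExtW a b) (hne : a ≠ b) : sizeW a < sizeW b := by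
  have hxy : ∃ x y, a x y ≠ b x y := by
    by_contra hc
    push_neg at hc
    exact hne (funext fun x => funext fun y => hc x y)
  obtain ⟨x, y, hxy⟩ := hxy
  have hlt : a x y < b x y := lt_of_le_of_ne (h x y) hxy
  refine Finset.sum_lt_sum (fun i _ => Finset.sum_le_sum fun j _ => h i j) ?_
  exact ⟨x, Finset.mem_univ x,
    Finset.sum_lt_sum (fun j _ => h x j) ⟨y, Finset.mem_univ y, hlt⟩⟩

/-- From any support one can extract a minimal support of no larger size. -/
lemma exists_msmm {C : Type*} [Fintype C] (n : ℕ) (μ : C → C → ℕ) (w : C) :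
    ∀ N (μY : C → C → ℕ), sizeW μY ≤ N → ExtW μY μ → NWMM n μY w →
      ∃ μZ : C → C → ℕ, MSMM n μ μZ w ∧ sizeW μZ ≤ sizeW μY := by
  intro N
  induction N with
  | zero =>
    intro μY hN hext hnw
    by_cases h : ∃ μ'' : C → C → ℕ, ExtW μ'' μY ∧ μ'' ≠ μY ∧ NWMM n μ'' w
    · obtain ⟨μ'', h1, h2, _⟩ := h
      have := sizeW_lt_of_ne h1 h2
      omega
    · exact ⟨μY, ⟨hext, hnw, fun μ'' he hne hn' => h ⟨μ'', he, hne, hn'⟩⟩, le_refl _⟩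
  | succ N ih =>
    intro μY hN hext hnw
    by_cases h : ∃ μ'' : C → C → ℕ, ExtW μ'' μY ∧ μ'' ≠ μY ∧ NWMM n μ'' w
    · obtain ⟨μ'', h1, h2, h3⟩ := h
      have hlt := sizeW_lt_of_ne h1 h2
      obtain ⟨μZ, hZ, hle⟩ :=
        ih μ'' (by omega) (fun x y => (h1 x y).trans (hext x y)) h3
      exact ⟨μZ, hZ, hle.trans hlt.le⟩
    · exact ⟨μY, ⟨hext, hnw, fun μ'' he hne hn' => h ⟨μ'', he, hne, hn'⟩⟩, le_refl _⟩

/-- A completion of `μX` that is worst for `w` and best for `v`. -/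
def comp1 {C : Type*} [DecidableEq C] (n : ℕ) (μX : C → C → ℕ) (w v : C)
    (f : C → ℕ) : C → C → ℕ := fun x y =>
  if x = y then 0 else if x = w then μX w y else if y = w then n - μX w x
  else if x = v then n - μX y v else if y = v then μX x y
  else if f x < f y then n - μX y x else μX x y

lemma comp1_ext {C : Type*} [DecidableEq C] (n : ℕ) (μX : C → C → ℕ) (w v : C)
    (f : C → ℕ) (hd : ∀ x, μX x x = 0)
    (hb : ∀ x y : C, x ≠ y → μX x y + μX y x ≤ n) :
    ExtW μX (comp1 n μX w v f) := by
  intro x y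
  by_cases hxy : x = y
  · subst hxy; simp [comp1, hd]
  · have h1 := hb x y hxy
    simp only [comp1, if_neg hxy]
    split_ifs <;> subst_vars <;> omega

lemma comp1_complete {C : Type*} [DecidableEq C] (n : ℕ) (μX : C → C → ℕ) (w v : C)
    (f : C → ℕ) (hinj : ∀ x y : C, f x = f y → x = y)
    (hb : ∀ x y : C, x ≠ y → μX x y + μX y x ≤ n) :
    IsCompleteW n (comp1 n μX w v f) := by
  constructor
  · intro x; simp [comp1]
  · intro x y hxy
    have h1 := hb x y hxy
    have htri : f x < f y ∨ f y < f x := by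
      rcases Nat.lt_trichotomy (f x) (f y) with h | h | h
      · exact Or.inl h
      · exact absurd (hinj x y h) hxy
      · exact Or.inr h
    simp only [comp1, if_neg hxy, if_neg (Ne.symm hxy)]
    split_ifs <;> subst_vars <;> first
      | omega
      | exact absurd rfl hxy

lemma comp1_w {C : Type*} [DecidableEq C] (n : ℕ) (μX : C → C → ℕ) (w v : C)
    (f : C → ℕ) {y : C} (hyw : y ≠ w) : comp1 n μX w v f w y = μX w y := by
  simp [comp1, (Ne.symm hyw : w ≠ y)]

lemma comp1_v {C : Type*} [DecidableEq C] (n : ℕ) (μX : C → C → ℕ) (w v : C)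
    (f : C → ℕ) (hvw : v ≠ w) {c : C} (hc : c ≠ v) :
    comp1 n μX w v f v c = n - μX c v := by
  by_cases hcw : c = w
  · subst hcw
    simp [comp1, (Ne.symm hc : v ≠ c), hvw]
  · simp [comp1, (Ne.symm hc : v ≠ c), hvw, hcw]

/-- Lower bound on the column of any `v ≠ w` in a support for `w`. -/
lemma col_bound {C : Type*} [Fintype C] [DecidableEq C] (n : ℕ) (μ μX : C → C → ℕ)
    (hG : IsCompleteW n μ) (w : C) (hext : ExtW μX μ) (hnw : NWMM n μX w)
    (v : C) (hvw : v ≠ w) : (n + 1) / 2 ≤ ∑ x : C, μX x v := by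
  classical
  set f : C → ℕ := fun c => ((Fintype.equivFin C) c : ℕ) with hf
  have hinj : ∀ x y : C, f x = f y → x = y := by
    intro x y h
    exact (Fintype.equivFin C).injective (Fin.val_injective h)
  have hd : ∀ x, μX x x = 0 := fun x =>
    Nat.le_zero.mp ((hext x x).trans (le_of_eq (hG.1 x)))
  have hb : ∀ x y : C, x ≠ y → μX x y + μX y x ≤ n := fun x y h =>
    le_trans (add_le_add (hext x y) (hext y x)) (le_of_eq (hG.2 x y h))
  set μ' := comp1 n μX w v f with hμ'
  have hcomp := comp1_complete n μX w v f hinj hb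
  have hext' := comp1_ext n μX w v f hd hb
  have hmm := hnw μ' hext' hcomp
  have h1 : mmScore μ' w ≤ μX w v :=
    Nat.sInf_le ⟨v, hvw, comp1_w n μX w v f hvw⟩
  have h2 : ∃ c, c ≠ v ∧ μ' v c = mmScore μ' v :=
    Nat.sInf_mem (⟨μ' v w, w, Ne.symm hvw, rfl⟩ :
      Set.Nonempty {k : ℕ | ∃ c' : C, c' ≠ v ∧ μ' v c' = k})
  obtain ⟨c, hcv, hc⟩ := h2
  have h3 : μ' v c = n - μX c v := comp1_v n μX w v f hvw hcv
  have key : n - μX c v ≤ μX w v := by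
    rw [← h3, hc]
    exact le_trans (hmm v) h1
  by_cases hcw : c = w
  · rw [hcw] at key
    have h5 : μX w v ≤ ∑ x : C, μX x v :=
      Finset.single_le_sum (f := fun x => μX x v) (fun i _ => Nat.zero_le _) (Finset.mem_univ w)
    omega
  · have hwc : w ≠ c := fun h => hcw h.symm
    have h5 : μX w v + μX c v ≤ ∑ x : C, μX x v := by
      have := Finset.sum_le_sum_of_subset
        (Finset.subset_univ ({w, c} : Finset C)) (f := fun x => μX x v)
      rwa [Finset.sum_pair hwc] at this
    omega

/-- The small support used for the upper bound. -/
def suppY {C : Type*} [DecidableEq C] (n s : ℕ) (w : C) (f : C → C) : C → C → ℕ :=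
  fun x y => if y = w ∨ x = y then 0 else
    max (if x = w then s else 0) (if x = f y then n - s else 0)

/-- Bounds on smallest minimal supports for maximin:
`⌈n/2⌉(m-1) ≤ |μX| ≤ n(m-1)`. -/
theorem stmt9 {C : Type*} [Fintype C] [DecidableEq C] [Nonempty C]
    (n m : ℕ) (hn : 0 < n) (hm : Fintype.card C = m)
    (μ : C → C → ℕ) (hG : IsCompleteW n μ)
    (w : C) (hw : InMM μ w) (μX : C → C → ℕ) (hX : SMSMM n μ μX w) :
    (n + 1) / 2 * (m - 1) ≤ sizeW μX ∧ sizeW μX ≤ n * (m - 1) := by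
  classical
  subst hm
  obtain ⟨⟨hext, hnw, _⟩, hsmall⟩ := hX
  constructor
  · -- lower bound
    calc (n + 1) / 2 * (Fintype.card C - 1)
        = ∑ _v ∈ Finset.univ.erase w, (n + 1) / 2 := by
          rw [Finset.sum_const, Finset.card_erase_of_mem (Finset.mem_univ w),
            Finset.card_univ, smul_eq_mul, mul_comm]
      _ ≤ ∑ v ∈ Finset.univ.erase w, ∑ x : C, μX x v :=
          Finset.sum_le_sum fun v hv =>
            col_bound n μ μX hG w hext hnw v (Finset.ne_of_mem_erase hv)
      _ ≤ ∑ v : C, ∑ x : C, μX x v :=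
          Finset.sum_le_sum_of_subset (Finset.erase_subset _ _)
      _ = sizeW μX := by rw [sizeW]; exact (Finset.sum_comm).symm
  · -- upper bound
    set s := mmScore μ w with hs
    have hex : ∀ v : C, ∃ c : C, v ≠ w → (c ≠ v ∧ μ v c = mmScore μ v) := by
      intro v
      by_cases hv : v = w
      · exact ⟨w, fun h => absurd hv h⟩
      · obtain ⟨c, hc1, hc2⟩ := Nat.sInf_mem
          (⟨μ v w, w, (fun h => hv h.symm), rfl⟩ :
            Set.Nonempty {k : ℕ | ∃ c' : C, c' ≠ v ∧ μ v c' = k})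
        exact ⟨c, fun _ => ⟨hc1, hc2⟩⟩
    choose f hf using hex
    set μY := suppY n s w f with hμY
    -- μY is contained in μ
    have hYext : ExtW μY μ := by
      intro x y
      by_cases h0 : y = w ∨ x = y
      · simp [hμY, suppY, h0]
      · push_neg at h0
        obtain ⟨hyw, hxy⟩ := h0
        simp only [hμY, suppY, if_neg (not_or.mpr ⟨hyw, hxy⟩)]
        refine max_le ?_ ?_
        · split_ifs with h
          · subst h
            exact Nat.sInf_le ⟨y, hyw, rfl⟩
          · exact Nat.zero_le _
        · split_ifs with h
          · subst h
            obtain ⟨hne, hval⟩ := hf y hyw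
            have hcmp := hG.2 (f y) y hne
            have hle := hw y
            omega
          · exact Nat.zero_le _
    -- w is a necessary winner in μY
    have hYnw : NWMM n μY w := by
      intro μ' hext' hcomp' v
      by_cases hvw : v = w
      · subst hvw; exact le_rfl
      · have hsw : s ≤ mmScore μ' w := by
          obtain ⟨c, hc, hcval⟩ := Nat.sInf_mem
            (⟨μ' w v, v, hvw, rfl⟩ :
              Set.Nonempty {k : ℕ | ∃ c' : C, c' ≠ w ∧ μ' w c' = k})
          rw [mmScore, ← hcval]
          refine le_trans ?_ (hext' w c)
          have : μY w c = max s (if w = f c then n - s else 0) := by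
            simp [hμY, suppY, hc, (Ne.symm hc : w ≠ c)]
          rw [this]
          exact le_max_left _ _
        have hsn : s ≤ n := by
          have h6 : s ≤ μ w v := Nat.sInf_le ⟨v, hvw, rfl⟩
          have h7 := hG.2 w v (Ne.symm hvw)
          omega
        obtain ⟨hne, hval⟩ := hf v hvw
        have hX1 : n - s ≤ μY (f v) v := by
          have : μY (f v) v = max (if f v = w then s else 0) (n - s) := by
            simp [hμY, suppY, hvw, hne]
          rw [this]
          exact le_max_right _ _
        have h1 : n - s ≤ μ' (f v) v := le_trans hX1 (hext' _ _)
        have h2 : μ' v (f v) + μ' (f v) v = n := hcomp'.2 v (f v) (Ne.symm hne)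
        have h3 : μ' v (f v) ≤ s := by omega
        exact le_trans (le_trans (Nat.sInf_le ⟨f v, hne, rfl⟩) h3) hsw
    -- μY is small
    have hYsize : sizeW μY ≤ n * (Fintype.card C - 1) := by
      have hcol0 : ∑ x : C, μY x w = 0 :=
        Finset.sum_eq_zero fun x _ => by simp [hμY, suppY]
      have hcolb : ∀ y : C, y ≠ w → ∑ x : C, μY x y ≤ n := by
        intro y hyw
        have hsn : s ≤ n := by
          have h6 : s ≤ μ w y := Nat.sInf_le ⟨y, hyw, rfl⟩
          have h7 := hG.2 w y (Ne.symm hyw)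
          omega
        calc ∑ x : C, μY x y
            ≤ ∑ x : C, ((if x = w then s else 0) + (if x = f y then n - s else 0)) := by
              refine Finset.sum_le_sum fun x _ => ?_
              by_cases h0 : y = w ∨ x = y
              · simp [hμY, suppY, h0]
              · simp only [hμY, suppY, if_neg h0]
                exact max_le (Nat.le_add_right _ _) (Nat.le_add_left _ _)
          _ = s + (n - s) := by
              rw [Finset.sum_add_distrib, Finset.sum_ite_eq' Finset.univ w fun _ => s,
                Finset.sum_ite_eq' Finset.univ (f y) fun _ => n - s]
              simp
          _ ≤ n := by omega
      calc sizeW μY = ∑ y : C, ∑ x : C, μY x y := Finset.sum_comm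
        _ = ∑ y ∈ Finset.univ.erase w, ∑ x : C, μY x y :=
            (Finset.sum_erase (f := fun y => ∑ x : C, μY x y) Finset.univ hcol0).symm
        _ ≤ ∑ _y ∈ Finset.univ.erase w, n :=
            Finset.sum_le_sum fun y hy => hcolb y (Finset.ne_of_mem_erase hy)
        _ = n * (Fintype.card C - 1) := by
            rw [Finset.sum_const, Finset.card_erase_of_mem (Finset.mem_univ w),
              Finset.card_univ, smul_eq_mul, mul_comm]
    obtain ⟨μZ, hZms, hZle⟩ :=
      exists_msmm n μ w (sizeW μY) μY le_rfl hYext hYnw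
    exact le_trans (le_trans (hsmall μZ hZms) hZle) hYsize
end

section
/- Let G = (C, μ) be a complete n-weighted tournament and let w ∈ Borda(G) be a Borda winner of G. Then for all smallest minimal supports X and Y for w ∈ Borda(G), the win counts satisfy |WC(X) − WC(Y)| ≤ max(1, n/2). -/
/-- The Borda score of `c` in `μ`: the total number of pairwise comparisons won. -/
def bScore {C : Type*} [Fintype C] (μ : C → C → ℕ) (c : C) : ℕ :=
  ∑ c' : C, μ c c'

/-- `c` is a Borda winner: its Borda score is maximal. -/
def InBorda {C : Type*} [Fintype C] (μ : C → C → ℕ) (c : C) : Prop :=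
  ∀ c' : C, bScore μ c' ≤ bScore μ c

/-- `w` is a necessary winner of Borda in the partial `n`-weighted tournament `μX`. -/
def NWB {C : Type*} [Fintype C] (n : ℕ) (μX : C → C → ℕ) (w : C) : Prop :=
  ∀ μ' : C → C → ℕ, ExtW μX μ' → IsCompleteW n μ' → InBorda μ' w

/-- `μX` is a minimal support for `w ∈ Borda(μ)`. -/
def MSB {C : Type*} [Fintype C] (n : ℕ) (μ μX : C → C → ℕ) (w : C) : Prop :=
  ExtW μX μ ∧ NWB n μX w ∧
    ∀ μY : C → C → ℕ, ExtW μY μX → μY ≠ μX → ¬ NWB n μY w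

/-- `μX` is a smallest minimal support for `w ∈ Borda(μ)`. -/
def SMSB {C : Type*} [Fintype C] (n : ℕ) (μ μX : C → C → ℕ) (w : C) : Prop :=
  MSB n μ μX w ∧ ∀ μY : C → C → ℕ, MSB n μ μY w → sizeW μX ≤ sizeW μY

/-- `min_{c ≠ w} μ(w, c)`: the worst performance of `w` in a head-to-head. -/
noncomputable def minOpp {C : Type*} (μ : C → C → ℕ) (w : C) : ℕ :=
  sInf {k : ℕ | ∃ c : C, c ≠ w ∧ μ w c = k}

/-- The win count of `μX` with respect to `w`. -/
def winCount {C : Type*} [Fintype C] (μX : C → C → ℕ) (w : C) : ℕ :=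
  ∑ c : C, μX w c

open Finset

set_option linter.unusedSectionVars false

section AuxDefs
variable {C : Type*} [Fintype C] [DecidableEq C]

/-- Column sum of a weighted tournament. -/
def colS (ν : C → C → ℕ) (c : C) : ℕ := ∑ x : C, ν x c

/-- Column sum excluding row `w`. -/
def Bcol (w : C) (ν : C → C → ℕ) (c : C) : ℕ := ∑ x ∈ univ.erase w, ν x c

/-- Decrement the entry at `(p,q)` by one. -/
def decW (ν : C → C → ℕ) (p q : C) : C → C → ℕ :=
  fun x y => if x = p ∧ y = q then ν x y - 1 else ν x y

/-- Increment the entry at `(p,q)` by one. -/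
def incW (ν : C → C → ℕ) (p q : C) : C → C → ℕ :=
  fun x y => if x = p ∧ y = q then ν x y + 1 else ν x y

/-- The necessary-winner condition, phrased combinatorially. -/
def PredB (n : ℕ) (w : C) (ν : C → C → ℕ) : Prop :=
  ∀ c, c ≠ w → (Fintype.card C - 1) * n ≤ winCount ν w + colS ν c

lemma decW_apply_ne {ν : C → C → ℕ} {p q x y : C} (h : ¬(x = p ∧ y = q)) :
    decW ν p q x y = ν x y := by simp [decW, h]

lemma incW_apply_ne {ν : C → C → ℕ} {p q x y : C} (h : ¬(x = p ∧ y = q)) :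
    incW ν p q x y = ν x y := by simp [incW, h]

lemma extW_decW (ν : C → C → ℕ) (p q : C) : ExtW (decW ν p q) ν := by
  intro x y; unfold decW; split <;> omega

lemma extW_trans {μ1 μ2 μ3 : C → C → ℕ} (h1 : ExtW μ1 μ2) (h2 : ExtW μ2 μ3) : ExtW μ1 μ3 :=
  fun x y => (h1 x y).trans (h2 x y)

lemma extW_incW_of_lt {ν μ : C → C → ℕ} {p q : C} (h : ExtW ν μ) (hlt : ν p q < μ p q) :
    ExtW (incW ν p q) μ := by
  intro x y; unfold incW; split
  · next hxy => rcases hxy with ⟨rfl, rfl⟩; omega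
  · exact h x y

lemma colS_decW_self {ν : C → C → ℕ} {p q : C} (h : ν p q ≠ 0) :
    colS (decW ν p q) q + 1 = colS ν q := by
  unfold colS
  rw [← Finset.add_sum_erase _ (fun x => decW ν p q x q) (mem_univ p),
      ← Finset.add_sum_erase _ (fun x => ν x q) (mem_univ p)]
  have h1 : decW ν p q p q = ν p q - 1 := by simp [decW]
  have h2 : ∑ x ∈ univ.erase p, decW ν p q x q = ∑ x ∈ univ.erase p, ν x q :=
    Finset.sum_congr rfl (fun x hx => decW_apply_ne (by
      rintro ⟨rfl, -⟩; exact (mem_erase.mp hx).1 rfl))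
  rw [h1, h2]; omega

lemma colS_decW_ne {ν : C → C → ℕ} {p q c : C} (hc : c ≠ q) :
    colS (decW ν p q) c = colS ν c :=
  Finset.sum_congr rfl (fun x _ => decW_apply_ne (by rintro ⟨rfl, rfl⟩; exact hc rfl))

lemma colS_decW {ν : C → C → ℕ} {p q : C} (h : ν p q ≠ 0) (c : C) :
    colS (decW ν p q) c + (if c = q then 1 else 0) = colS ν c := by
  rcases eq_or_ne c q with hc | hc
  · rw [if_pos hc, hc]; exact colS_decW_self h
  · rw [if_neg hc, add_zero]; exact colS_decW_ne hc

lemma colS_incW_self (ν : C → C → ℕ) (p q : C) :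
    colS (incW ν p q) q = colS ν q + 1 := by
  unfold colS
  rw [← Finset.add_sum_erase _ (fun x => incW ν p q x q) (mem_univ p),
      ← Finset.add_sum_erase _ (fun x => ν x q) (mem_univ p)]
  have h1 : incW ν p q p q = ν p q + 1 := by simp [incW]
  have h2 : ∑ x ∈ univ.erase p, incW ν p q x q = ∑ x ∈ univ.erase p, ν x q :=
    Finset.sum_congr rfl (fun x hx => incW_apply_ne (by
      rintro ⟨rfl, -⟩; exact (mem_erase.mp hx).1 rfl))
  rw [h1, h2]; omega

lemma colS_incW_ne {ν : C → C → ℕ} {p q c : C} (hc : c ≠ q) :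
    colS (incW ν p q) c = colS ν c :=
  Finset.sum_congr rfl (fun x _ => incW_apply_ne (by rintro ⟨rfl, rfl⟩; exact hc rfl))

lemma colS_incW (ν : C → C → ℕ) (p q : C) (c : C) :
    colS (incW ν p q) c = colS ν c + (if c = q then 1 else 0) := by
  rcases eq_or_ne c q with hc | hc
  · rw [if_pos hc, hc]; exact colS_incW_self ν p q
  · rw [if_neg hc, add_zero]; exact colS_incW_ne hc

lemma Bcol_decW_self {ν : C → C → ℕ} {w p q : C} (hp : p ≠ w) (h : ν p q ≠ 0) :
    Bcol w (decW ν p q) q + 1 = Bcol w ν q := by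
  unfold Bcol
  rw [← Finset.add_sum_erase _ (fun x => decW ν p q x q) (mem_erase.mpr ⟨hp, mem_univ p⟩),
      ← Finset.add_sum_erase _ (fun x => ν x q) (mem_erase.mpr ⟨hp, mem_univ p⟩)]
  have h1 : decW ν p q p q = ν p q - 1 := by simp [decW]
  have h2 : ∑ x ∈ (univ.erase w).erase p, decW ν p q x q
      = ∑ x ∈ (univ.erase w).erase p, ν x q :=
    Finset.sum_congr rfl (fun x hx => decW_apply_ne (by
      rintro ⟨rfl, -⟩; exact (mem_erase.mp hx).1 rfl))
  rw [h1, h2]; omega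

lemma Bcol_decW_ne {ν : C → C → ℕ} {w p q c : C} (hc : c ≠ q) :
    Bcol w (decW ν p q) c = Bcol w ν c :=
  Finset.sum_congr rfl (fun x _ => decW_apply_ne (by rintro ⟨rfl, rfl⟩; exact hc rfl))

lemma winCount_decW {ν : C → C → ℕ} {w p : C} (q : C) (hp : p ≠ w) :
    winCount (decW ν p q) w = winCount ν w :=
  Finset.sum_congr rfl (fun c _ => decW_apply_ne (by rintro ⟨rfl, rfl⟩; exact hp rfl))

lemma winCount_incW (ν : C → C → ℕ) (w q : C) :
    winCount (incW ν w q) w = winCount ν w + 1 := by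
  unfold winCount
  rw [← Finset.add_sum_erase _ (fun c => incW ν w q w c) (mem_univ q),
      ← Finset.add_sum_erase _ (fun c => ν w c) (mem_univ q)]
  have h1 : incW ν w q w q = ν w q + 1 := by simp [incW]
  have h2 : ∑ c ∈ univ.erase q, incW ν w q w c = ∑ c ∈ univ.erase q, ν w c :=
    Finset.sum_congr rfl (fun c hc => incW_apply_ne (by
      rintro ⟨-, rfl⟩; exact (mem_erase.mp hc).1 rfl))
  rw [h1, h2]; omega

lemma sizeW_eq_colS (ν : C → C → ℕ) : sizeW ν = ∑ c : C, colS ν c := by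
  unfold sizeW colS; exact Finset.sum_comm

lemma sizeW_decW {ν : C → C → ℕ} {p q : C} (h : ν p q ≠ 0) :
    sizeW (decW ν p q) + 1 = sizeW ν := by
  rw [sizeW_eq_colS, sizeW_eq_colS]
  have := fun c => colS_decW (ν := ν) h c
  calc ∑ c : C, colS (decW ν p q) c + 1
      = ∑ c : C, (colS (decW ν p q) c + (if c = q then 1 else 0)) := by
        rw [Finset.sum_add_distrib, Finset.sum_ite_eq' univ q (fun _ => 1)]
        simp
    _ = ∑ c : C, colS ν c := Finset.sum_congr rfl (fun c _ => this c)

lemma sizeW_incW (ν : C → C → ℕ) (p q : C) :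
    sizeW (incW ν p q) = sizeW ν + 1 := by
  rw [sizeW_eq_colS, sizeW_eq_colS]
  calc ∑ c : C, colS (incW ν p q) c
      = ∑ c : C, (colS ν c + (if c = q then 1 else 0)) :=
        Finset.sum_congr rfl (fun c _ => colS_incW ν p q c)
    _ = ∑ c : C, colS ν c + 1 := by
        rw [Finset.sum_add_distrib, Finset.sum_ite_eq' univ q (fun _ => 1)]; simp

lemma sizeW_lt_of_ext {ζ ν : C → C → ℕ} (h : ExtW ζ ν) (hne : ζ ≠ ν) :
    sizeW ζ < sizeW ν := by
  have : ∃ x y, ζ x y ≠ ν x y := by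
    by_contra hc; push_neg at hc
    exact hne (funext fun x => funext fun y => hc x y)
  obtain ⟨x0, y0, hxy⟩ := this
  unfold sizeW
  apply Finset.sum_lt_sum (fun x _ => Finset.sum_le_sum (fun y _ => h x y))
  refine ⟨x0, mem_univ _, ?_⟩
  apply Finset.sum_lt_sum (fun y _ => h x0 y)
  exact ⟨y0, mem_univ _, lt_of_le_of_ne (h x0 y0) hxy⟩

end AuxDefs
section Char
variable {C : Type*} [Fintype C] [DecidableEq C]

/-- The pessimistic completion boosting challenger `c` against `w`. -/
noncomputable def compW (n : ℕ) (w c : C) (ν : C → C → ℕ) : C → C → ℕ := fun x y =>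
  if x = y then 0
  else if x = c then n - ν y x
  else if y = c then ν x y
  else if x = w then ν x y
  else if y = w then n - ν y x
  else if (Fintype.equivFin C x : ℕ) < (Fintype.equivFin C y : ℕ) then n - ν y x else ν x y

variable {n : ℕ} {w c : C} {ν : C → C → ℕ}

lemma compW_complete (hle : ∀ x y : C, x ≠ y → ν x y + ν y x ≤ n) :
    IsCompleteW n (compW n w c ν) := by
  constructor
  · intro x; simp [compW]
  · intro x y hxy
    have hyx := hxy.symm
    have hb := hle x y hxy
    have hinj : (Fintype.equivFin C x : ℕ) ≠ (Fintype.equivFin C y : ℕ) := by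
      intro h
      exact hxy ((Fintype.equivFin C).injective (Fin.ext h))
    unfold compW
    split_ifs <;> first | omega | simp_all | (exfalso; omega)

lemma compW_ext (hle : ∀ x y : C, x ≠ y → ν x y + ν y x ≤ n) (hdiag : ∀ x, ν x x = 0) :
    ExtW ν (compW n w c ν) := by
  intro x y
  unfold compW
  rcases eq_or_ne x y with rfl | hxy
  · simp [hdiag x]
  · have hb := hle x y hxy
    simp only [if_neg hxy]
    split
    · omega
    · split
      · omega
      · split
        · omega
        · split
          · omega
          · split <;> omega

lemma compW_score_w (hc : c ≠ w) (hdiag : ∀ x, ν x x = 0) :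
    bScore (compW n w c ν) w = winCount ν w := by
  unfold bScore winCount
  refine Finset.sum_congr rfl (fun y _ => ?_)
  rcases eq_or_ne w y with rfl | hwy
  · simp [compW, hdiag w]
  · rcases eq_or_ne y c with rfl | hyc
    · simp [compW, hwy, Ne.symm hc]
    · simp [compW, hwy, Ne.symm hc, hyc]

lemma compW_score_c (hc : c ≠ w) (hdiag : ∀ x, ν x x = 0)
    (hlen : ∀ y : C, y ≠ c → ν y c ≤ n) :
    bScore (compW n w c ν) c + colS ν c = (Fintype.card C - 1) * n := by
  have h1 : bScore (compW n w c ν) c = ∑ y ∈ univ.erase c, (n - ν y c) := by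
    unfold bScore
    rw [← Finset.add_sum_erase _ (fun y => compW n w c ν c y) (Finset.mem_univ c)]
    have hz : compW n w c ν c c = 0 := by simp [compW]
    rw [hz, zero_add]
    refine Finset.sum_congr rfl (fun y hy => ?_)
    have hyc : c ≠ y := Ne.symm (Finset.mem_erase.mp hy).1
    simp [compW, hyc]
  have h2 : colS ν c = ∑ y ∈ univ.erase c, ν y c := by
    unfold colS
    rw [← Finset.add_sum_erase _ (fun y => ν y c) (Finset.mem_univ c), hdiag c, zero_add]
  rw [h1, h2, ← Finset.sum_add_distrib]
  have h3 : ∀ y ∈ univ.erase c, (n - ν y c) + ν y c = n := by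
    intro y hy
    have := hlen y (Finset.mem_erase.mp hy).1
    omega
  rw [Finset.sum_congr rfl h3, Finset.sum_const, Finset.card_erase_of_mem (Finset.mem_univ c),
    Finset.card_univ, smul_eq_mul]

/-- Characterization of necessary Borda winner for partial tournaments inside `μ`. -/
lemma nwb_iff_pred {μ : C → C → ℕ} (hG : IsCompleteW n μ) (hext : ExtW ν μ) (w : C) :
    NWB n ν w ↔ PredB n w ν := by
  have hdiag : ∀ x, ν x x = 0 := fun x => by have := hext x x; have := hG.1 x; omega
  have hpart : ∀ x y : C, x ≠ y → ν x y + ν y x ≤ n := by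
    intro x y hxy
    have h1 := hext x y; have h2 := hext y x; have := hG.2 x y hxy; omega
  have hlen : ∀ x y : C, x ≠ y → ν x y ≤ n := fun x y hxy => by have := hpart x y hxy; omega
  constructor
  · -- NWB → PredB, by contraposition via the pessimistic completion
    intro hnwb c hcw
    by_contra hlt
    push_neg at hlt
    have hB := hnwb (compW n w c ν) (compW_ext hpart hdiag) (compW_complete hpart)
    have hw : bScore (compW n w c ν) w = winCount ν w := compW_score_w hcw hdiag
    have hcsc : bScore (compW n w c ν) c + colS ν c = (Fintype.card C - 1) * n :=
      compW_score_c hcw hdiag (fun y hy => hlen y c hy)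
    have := hB c
    omega
  · -- PredB → NWB
    intro hP μ' hext' hcomp' c'
    rcases eq_or_ne c' w with rfl | hcw
    · exact le_rfl
    · have key1 : winCount ν w ≤ bScore μ' w := Finset.sum_le_sum (fun y _ => hext' w y)
      have key2 : bScore μ' c' + ∑ x ∈ univ.erase c', μ' x c' = (Fintype.card C - 1) * n := by
        have hb : bScore μ' c' = ∑ y ∈ univ.erase c', μ' c' y := by
          unfold bScore
          rw [← Finset.add_sum_erase _ (fun y => μ' c' y) (Finset.mem_univ c'),
            hcomp'.1 c', zero_add]
        rw [hb, ← Finset.sum_add_distrib]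
        have : ∀ y ∈ univ.erase c', μ' c' y + μ' y c' = n := fun y hy =>
          hcomp'.2 c' y (Ne.symm (Finset.mem_erase.mp hy).1)
        rw [Finset.sum_congr rfl this, Finset.sum_const,
          Finset.card_erase_of_mem (Finset.mem_univ c'), Finset.card_univ, smul_eq_mul]
      have key3 : colS ν c' ≤ ∑ x ∈ univ.erase c', μ' x c' := by
        have : colS ν c' = ∑ x ∈ univ.erase c', ν x c' := by
          unfold colS
          rw [← Finset.add_sum_erase _ (fun x => ν x c') (Finset.mem_univ c'), hdiag c', zero_add]
        rw [this]
        exact Finset.sum_le_sum (fun x _ => hext' x c')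
      have := hP c' hcw
      omega

end Char
section Main
variable {C : Type*} [Fintype C] [DecidableEq C]

/-- Every necessary-winner support contains a minimal support of no larger size. -/
lemma exists_msb {n : ℕ} {μ : C → C → ℕ} {w : C} :
    ∀ k (ν : C → C → ℕ), sizeW ν ≤ k → ExtW ν μ → NWB n ν w →
      ∃ ξ, MSB n μ ξ w ∧ sizeW ξ ≤ sizeW ν := by
  intro k
  induction k with
  | zero =>
    intro ν hk hext hnwb
    by_cases hmin : ∀ ζ : C → C → ℕ, ExtW ζ ν → ζ ≠ ν → ¬ NWB n ζ w
    · exact ⟨ν, ⟨hext, hnwb, hmin⟩, le_rfl⟩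
    · push_neg at hmin
      obtain ⟨ζ, h1, h2, h3⟩ := hmin
      have := sizeW_lt_of_ext h1 h2
      omega
  | succ k ih =>
    intro ν hk hext hnwb
    by_cases hmin : ∀ ζ : C → C → ℕ, ExtW ζ ν → ζ ≠ ν → ¬ NWB n ζ w
    · exact ⟨ν, ⟨hext, hnwb, hmin⟩, le_rfl⟩
    · push_neg at hmin
      obtain ⟨ζ, h1, h2, h3⟩ := hmin
      have hlt := sizeW_lt_of_ext h1 h2
      obtain ⟨ξ, hms, hle⟩ := ih ζ (by omega) (extW_trans h1 hext) h3
      exact ⟨ξ, hms, by omega⟩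

end Main
section MainLemma
variable {C : Type*} [Fintype C] [DecidableEq C]

lemma colS_split (w : C) (Z : C → C → ℕ) (c : C) :
    colS Z c = Z w c + Bcol w Z c := by
  unfold colS Bcol
  rw [← Finset.add_sum_erase _ (fun x => Z x c) (mem_univ w)]

lemma size_decomp {w : C} (Z : C → C → ℕ) (hdiag : Z w w = 0) (hcol : ∀ x, Z x w = 0) :
    sizeW Z = winCount Z w + ∑ c ∈ univ.erase w, Bcol w Z c := by
  rw [sizeW_eq_colS, ← Finset.add_sum_erase _ (colS Z) (mem_univ w)]
  have h0 : colS Z w = 0 := Finset.sum_eq_zero (fun x _ => hcol x)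
  rw [h0, zero_add, Finset.sum_congr rfl (fun c _ => colS_split w Z c),
    Finset.sum_add_distrib]
  congr 1
  unfold winCount
  rw [← Finset.add_sum_erase _ (fun c => Z w c) (mem_univ w), hdiag, zero_add]

lemma clean_col {n : ℕ} {μ : C → C → ℕ} {w : C} (hG : IsCompleteW n μ)
    (Z : C → C → ℕ) (hZμ : ExtW Z μ) (hZP : PredB n w Z)
    (hZopt : ∀ ν, ExtW ν μ → PredB n w ν → sizeW Z ≤ sizeW ν) : ∀ x, Z x w = 0 := by
  intro x; by_contra hx
  have hxw : x ≠ w := by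
    intro he
    apply hx
    rw [he]
    have h1 := hZμ w w
    have h2 := hG.1 w
    omega
  have hext : ExtW (decW Z x w) μ := extW_trans (extW_decW Z x w) hZμ
  have hP : PredB n w (decW Z x w) := by
    intro c hcw
    rw [winCount_decW w hxw, colS_decW_ne hcw]
    exact hZP c hcw
  have hsz := sizeW_decW (ν := Z) (p := x) (q := w) hx
  have := hZopt _ hext hP
  omega

/-- The heart of the theorem: two size-optimal necessary-winner supports whose
win counts differ by `d ≥ 2` must satisfy `2 * d ≤ n`. -/
lemma main_gap {n : ℕ} {μ : C → C → ℕ} {w : C} (hG : IsCompleteW n μ)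
    (X Y : C → C → ℕ) (hXμ : ExtW X μ) (hYμ : ExtW Y μ)
    (hXP : PredB n w X) (hYP : PredB n w Y)
    (hXopt : ∀ ν, ExtW ν μ → PredB n w ν → sizeW X ≤ sizeW ν)
    (hYopt : ∀ ν, ExtW ν μ → PredB n w ν → sizeW Y ≤ sizeW ν)
    {d : ℕ} (hd : winCount X w = winCount Y w + d) (hd2 : 2 ≤ d) : 2 * d ≤ n := by
  have hXd : ∀ x, X x x = 0 := fun x => by have := hXμ x x; have := hG.1 x; omega
  have hYd : ∀ x, Y x x = 0 := fun x => by have := hYμ x x; have := hG.1 x; omega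
  have hXcl : ∀ x, X x w = 0 := clean_col hG X hXμ hXP hXopt
  have hYcl : ∀ x, Y x w = 0 := clean_col hG Y hYμ hYP hYopt
  have exB : ∀ (Z : C → C → ℕ) c, Bcol w Z c ≠ 0 → ∃ x, x ≠ w ∧ Z x c ≠ 0 := by
    intro Z c hc
    obtain ⟨x, hx, hxc⟩ := Finset.exists_ne_zero_of_sum_ne_zero hc
    exact ⟨x, (mem_erase.mp hx).1, hxc⟩
  -- spare capacity in `Y`'s `w`-row
  have hspare : ∃ c0, Y w c0 < μ w c0 := by
    by_contra h; push_neg at h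
    have h1 : winCount X w ≤ ∑ c, μ w c := Finset.sum_le_sum fun c _ => hXμ w c
    have h2 : ∑ c : C, μ w c ≤ winCount Y w := Finset.sum_le_sum fun c _ => h c
    omega
  obtain ⟨c0, hc0⟩ := hspare
  -- sizes
  set SBX := ∑ c ∈ univ.erase w, Bcol w X c with hSBXdef
  set SBY := ∑ c ∈ univ.erase w, Bcol w Y c with hSBYdef
  have hsX : sizeW X = winCount X w + SBX := size_decomp X (hXd w) hXcl
  have hsY : sizeW Y = winCount Y w + SBY := size_decomp Y (hYd w) hYcl
  have hseq : sizeW X = sizeW Y := le_antisymm (hXopt Y hYμ hYP) (hYopt X hXμ hXP)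
  have hSB : SBY = SBX + d := by omega
  -- Claim 1: at most one column of `Y` has positive non-`w` weight
  have huniq : ∀ c1 c2, c1 ≠ c2 → Bcol w Y c1 ≠ 0 → Bcol w Y c2 ≠ 0 → False := by
    intro c1 c2 h12 hB1 hB2
    obtain ⟨x1, hx1w, hx1⟩ := exB Y c1 hB1
    obtain ⟨x2, hx2w, hx2⟩ := exB Y c2 hB2
    have hx2' : decW Y x1 c1 x2 c2 ≠ 0 := by
      rw [decW_apply_ne (by rintro ⟨-, h⟩; exact h12 h.symm)]; exact hx2
    set ν2 := decW (decW Y x1 c1) x2 c2 with hν2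
    have hwc0 : ν2 w c0 = Y w c0 := by
      rw [hν2, decW_apply_ne (by rintro ⟨h, -⟩; exact hx2w h.symm),
        decW_apply_ne (by rintro ⟨h, -⟩; exact hx1w h.symm)]
    set ν := incW ν2 w c0 with hν
    have hext : ExtW ν μ :=
      extW_incW_of_lt (extW_trans (extW_decW _ _ _) (extW_trans (extW_decW _ _ _) hYμ))
        (by rw [hwc0]; exact hc0)
    have hwin : winCount ν w = winCount Y w + 1 := by
      rw [hν, winCount_incW, hν2, winCount_decW c2 hx2w, winCount_decW c1 hx1w]
    have hP : PredB n w ν := by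
      intro c hcw
      have e1 := colS_decW (ν := Y) (p := x1) (q := c1) hx1 c
      have e2 := colS_decW (ν := decW Y x1 c1) (p := x2) (q := c2) hx2' c
      have e3 := colS_incW ν2 w c0 c
      rw [← hν2] at e2
      rw [← hν] at e3
      have hite : (if c = c1 then (1:ℕ) else 0) + (if c = c2 then 1 else 0) ≤ 1 := by
        rcases eq_or_ne c c1 with rfl | g1
        · rw [if_pos rfl, if_neg h12]
        · rw [if_neg g1]; split <;> omega
      have := hYP c hcw
      omega
    have s1 := sizeW_decW (ν := Y) (p := x1) (q := c1) hx1
    have s2 := sizeW_decW (ν := decW Y x1 c1) (p := x2) (q := c2) hx2'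
    have s3 := sizeW_incW ν2 w c0
    rw [← hν2] at s2
    rw [← hν] at s3
    have := hYopt ν hext hP
    omega
  -- the unique deficient column `cs`
  obtain ⟨cs, hcsmem, hcs⟩ := Finset.exists_ne_zero_of_sum_ne_zero
    (show SBY ≠ 0 by omega)
  have hcsw : cs ≠ w := (mem_erase.mp hcsmem).1
  have hBzero : ∀ c, c ≠ cs → Bcol w Y c = 0 := fun c hne => by
    by_contra hb; exact huniq c cs hne hb hcs
  have hSBY : SBY = Bcol w Y cs :=
    Finset.sum_eq_single_of_mem cs hcsmem (fun b _ hb => hBzero b hb)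
  -- Claim 2: the constraint at `cs` is tight in `Y`
  have htight : winCount Y w + colS Y cs = (Fintype.card C - 1) * n := by
    have hge := hYP cs hcsw
    by_contra h
    obtain ⟨xs, hxsw, hxs⟩ := exB Y cs hcs
    have hext : ExtW (decW Y xs cs) μ := extW_trans (extW_decW _ _ _) hYμ
    have hP : PredB n w (decW Y xs cs) := by
      intro c hcw
      have e := colS_decW (ν := Y) (p := xs) (q := cs) hxs c
      have hwin := winCount_decW (ν := Y) cs hxsw
      have := hYP c hcw
      rcases eq_or_ne c cs with rfl | g
      · rw [if_pos rfl] at e; omega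
      · rw [if_neg g] at e; omega
    have hsz := sizeW_decW (ν := Y) (p := xs) (q := cs) hxs
    have := hYopt _ hext hP
    omega
  -- Claim 3: `Y`'s `w`-row is saturated at `cs`
  have hYcs : Y w cs = μ w cs := by
    have hle := hYμ w cs
    by_contra h
    have hlt : Y w cs < μ w cs := lt_of_le_of_ne hle h
    obtain ⟨x1, hx1w, hx1⟩ := exB Y cs hcs
    have hb1 : Bcol w (decW Y x1 cs) cs + 1 = Bcol w Y cs := Bcol_decW_self hx1w hx1
    have hbig : 2 ≤ Bcol w Y cs := by omega
    obtain ⟨x2, hx2w, hx2⟩ := exB (decW Y x1 cs) cs (by omega)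
    set ν2 := decW (decW Y x1 cs) x2 cs with hν2
    have hwcs : ν2 w cs = Y w cs := by
      rw [hν2, decW_apply_ne (by rintro ⟨hh, -⟩; exact hx2w hh.symm),
        decW_apply_ne (by rintro ⟨hh, -⟩; exact hx1w hh.symm)]
    set ν := incW ν2 w cs with hν
    have hext : ExtW ν μ :=
      extW_incW_of_lt (extW_trans (extW_decW _ _ _) (extW_trans (extW_decW _ _ _) hYμ))
        (by rw [hwcs]; exact hlt)
    have hwin : winCount ν w = winCount Y w + 1 := by
      rw [hν, winCount_incW, hν2, winCount_decW cs hx2w, winCount_decW cs hx1w]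
    have hP : PredB n w ν := by
      intro c hcw
      have e1 := colS_decW (ν := Y) (p := x1) (q := cs) hx1 c
      have e2 := colS_decW (ν := decW Y x1 cs) (p := x2) (q := cs) hx2 c
      have e3 := colS_incW ν2 w cs c
      rw [← hν2] at e2
      rw [← hν] at e3
      have := hYP c hcw
      rcases eq_or_ne c cs with rfl | g
      · rw [if_pos rfl] at e1 e2 e3; omega
      · rw [if_neg g] at e1 e2 e3; omega
    have s1 := sizeW_decW (ν := Y) (p := x1) (q := cs) hx1
    have s2 := sizeW_decW (ν := decW Y x1 cs) (p := x2) (q := cs) hx2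
    have s3 := sizeW_incW ν2 w cs
    rw [← hν2] at s2
    rw [← hν] at s3
    have := hYopt ν hext hP
    omega
  -- assemble the numeric facts
  have hKXcs := hXP cs hcsw
  have hXsplit := colS_split w X cs
  have hYsplit := colS_split w Y cs
  have hXwcs : X w cs ≤ μ w cs := hXμ w cs
  have hBXcs : Bcol w X cs ≤ SBX :=
    Finset.single_le_sum (f := fun c => Bcol w X c) (fun i _ => Nat.zero_le _) hcsmem
  by_cases hex : ∃ c1, c1 ≠ w ∧ c1 ≠ cs
  · obtain ⟨c1, h1w, h1cs⟩ := hex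
    have hK1 := hYP c1 h1w
    have hY1split := colS_split w Y c1
    have hB1 : Bcol w Y c1 = 0 := hBzero c1 h1cs
    have hY1le : Y w c1 ≤ μ w c1 := hYμ w c1
    have hn1 : μ w c1 + μ c1 w = n := hG.2 w c1 (Ne.symm h1w)
    -- bound the total `w`-row of `X`
    have hc1mem : c1 ∈ univ.erase w := mem_erase.mpr ⟨h1w, mem_univ c1⟩
    have hAX : winCount X w ≤ μ w cs + (Fintype.card C - 2) * n := by
      have hrw : winCount X w
          = X w w + (X w cs + ∑ c ∈ (univ.erase w).erase cs, X w c) := by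
        unfold winCount
        rw [← Finset.add_sum_erase _ (fun c => X w c) (mem_univ w),
          ← Finset.add_sum_erase _ (fun c => X w c) hcsmem]
      have hbound : ∑ c ∈ (univ.erase w).erase cs, X w c ≤ (Fintype.card C - 2) * n := by
        have h1 : ∀ c ∈ (univ.erase w).erase cs, X w c ≤ n := by
          intro c hc
          have hcw' : c ≠ w := (mem_erase.mp (mem_erase.mp hc).2).1
          have := hXμ w c
          have := hG.2 w c (Ne.symm hcw')
          omega
        calc ∑ c ∈ (univ.erase w).erase cs, X w c ≤ ∑ c ∈ (univ.erase w).erase cs, n :=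
              Finset.sum_le_sum h1
          _ = (Fintype.card C - 2) * n := by
              have hcard2 : ((univ.erase w).erase cs).card = Fintype.card C - 2 := by
                rw [Finset.card_erase_of_mem hcsmem,
                  Finset.card_erase_of_mem (mem_univ w), Finset.card_univ]
                omega
              rw [Finset.sum_const, smul_eq_mul, hcard2]
      have hXww := hXd w
      omega
    have hcard : 1 < Fintype.card C := Fintype.one_lt_card_iff.mpr ⟨cs, w, hcsw⟩
    have hKM : (Fintype.card C - 1) * n = (Fintype.card C - 2) * n + n := by
      have h2 : Fintype.card C - 1 = (Fintype.card C - 2) + 1 := by omega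
      rw [h2, add_mul, one_mul]
    omega
  · push_neg at hex
    have hXr : ∑ c ∈ (univ.erase w).erase cs, X w c = 0 :=
      Finset.sum_eq_zero fun c hc => by
        have h1 : c ≠ cs := (mem_erase.mp hc).1
        have h2 : c ≠ w := (mem_erase.mp (mem_erase.mp hc).2).1
        exact absurd (hex c h2) h1
    have hYr : ∑ c ∈ (univ.erase w).erase cs, Y w c = 0 :=
      Finset.sum_eq_zero fun c hc => by
        have h1 : c ≠ cs := (mem_erase.mp hc).1
        have h2 : c ≠ w := (mem_erase.mp (mem_erase.mp hc).2).1
        exact absurd (hex c h2) h1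
    have hXrw : winCount X w = X w w + (X w cs + ∑ c ∈ (univ.erase w).erase cs, X w c) := by
      unfold winCount
      rw [← Finset.add_sum_erase _ (fun c => X w c) (mem_univ w),
        ← Finset.add_sum_erase _ (fun c => X w c) hcsmem]
    have hYrw : winCount Y w = Y w w + (Y w cs + ∑ c ∈ (univ.erase w).erase cs, Y w c) := by
      unfold winCount
      rw [← Finset.add_sum_erase _ (fun c => Y w c) (mem_univ w),
        ← Finset.add_sum_erase _ (fun c => Y w c) hcsmem]
    have hXww := hXd w
    have hYww := hYd w
    omega

end MainLemma
/-- Any two smallest minimal supports for a Borda winner `w` have win counts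
differing by at most `max(1, n/2)`. -/
theorem stmt12 {C : Type*} [Fintype C] [DecidableEq C] [Nonempty C]
    (n : ℕ) (hn : 0 < n)
    (μ : C → C → ℕ) (hG : IsCompleteW n μ) (w : C) (hw : InBorda μ w)
    (μX μY : C → C → ℕ) (hX : SMSB n μ μX w) (hY : SMSB n μ μY w) :
    |(winCount μX w : ℝ) - (winCount μY w : ℝ)| ≤ max 1 ((n : ℝ) / 2) := by
  classical
  obtain ⟨⟨hXμ, hXN, hXmin⟩, hXsms⟩ := hX
  obtain ⟨⟨hYμ, hYN, hYmin⟩, hYsms⟩ := hY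
  have hXP : PredB n w μX := (nwb_iff_pred hG hXμ w).mp hXN
  have hYP : PredB n w μY := (nwb_iff_pred hG hYμ w).mp hYN
  have hXopt : ∀ ν, ExtW ν μ → PredB n w ν → sizeW μX ≤ sizeW ν := by
    intro ν h1 h2
    obtain ⟨ξ, hms, hle⟩ := exists_msb (sizeW ν) ν le_rfl h1 ((nwb_iff_pred hG h1 w).mpr h2)
    exact (hXsms ξ hms).trans hle
  have hYopt : ∀ ν, ExtW ν μ → PredB n w ν → sizeW μY ≤ sizeW ν := by
    intro ν h1 h2
    obtain ⟨ξ, hms, hle⟩ := exists_msb (sizeW ν) ν le_rfl h1 ((nwb_iff_pred hG h1 w).mpr h2)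
    exact (hYsms ξ hms).trans hle
  have key : ∀ (A B : C → C → ℕ), ExtW A μ → ExtW B μ → PredB n w A → PredB n w B →
      (∀ ν, ExtW ν μ → PredB n w ν → sizeW A ≤ sizeW ν) →
      (∀ ν, ExtW ν μ → PredB n w ν → sizeW B ≤ sizeW ν) →
      winCount B w ≤ winCount A w →
      ((winCount A w : ℝ) - winCount B w) ≤ max 1 ((n : ℝ) / 2) := by
    intro A B hAμ hBμ hAP hBP hAopt hBopt hle
    set d := winCount A w - winCount B w with hddef
    have hd : winCount A w = winCount B w + d := by omega
    have hcast : ((winCount A w : ℝ) - winCount B w) = (d : ℝ) := by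
      rw [hd]; push_cast; ring
    rw [hcast]
    by_cases hsmall : d ≤ 1
    · refine le_trans ?_ (le_max_left _ _)
      exact_mod_cast hsmall
    · have h2d : 2 * d ≤ n := main_gap hG A B hAμ hBμ hAP hBP hAopt hBopt hd (by omega)
      refine le_trans ?_ (le_max_right _ _)
      rw [le_div_iff₀ (by norm_num : (0:ℝ) < 2)]
      exact_mod_cast (by omega : d * 2 ≤ n)
  rcases le_total (winCount μY w) (winCount μX w) with h | h
  · have := key μX μY hXμ hYμ hXP hYP hXopt hYopt h
    have habs : |(winCount μX w : ℝ) - winCount μY w|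
        = (winCount μX w : ℝ) - winCount μY w :=
      abs_of_nonneg (sub_nonneg.mpr (by exact_mod_cast h))
    rw [habs]; exact this
  · have := key μY μX hYμ hXμ hYP hXP hYopt hXopt h
    rw [abs_sub_comm]
    have habs : |(winCount μY w : ℝ) - winCount μX w|
        = (winCount μY w : ℝ) - winCount μX w :=
      abs_of_nonneg (sub_nonneg.mpr (by exact_mod_cast h))
    rw [habs]; exact this
end

section
/- Let G = (C, μ) be a partial n-weighted tournament with |C| = m candidates and let w ∈ C. Then w is a necessary winner of the Borda rule in G if and only if for every candidate c ∈ C \ {w}, Σ_{c'∈C} μ(w, c') ≥ n(m − 1) − Σ_{c'∈C} μ(c', c); equivalently, the minimal possible Borda score of w over completions of G is at least the maximal possible Borda score of c over completions of G, for every c ≠ w. -/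
lemma sumPairW {C : Type*} [Fintype C] [DecidableEq C] {n : ℕ} {μ' : C → C → ℕ}
    (h : IsCompleteW n μ') (c : C) :
    (∑ c' : C, μ' c c') + (∑ c' : C, μ' c' c) = n * (Fintype.card C - 1) := by
  rw [← Finset.sum_add_distrib]
  rw [← Finset.add_sum_erase Finset.univ (fun x => μ' c x + μ' x c) (Finset.mem_univ c)]
  have h1 : ∀ x ∈ Finset.univ.erase c, μ' c x + μ' x c = n := by
    intro x hx
    exact h.2 c x (Finset.ne_of_mem_erase hx).symm
  rw [h.1 c, Finset.sum_congr rfl h1, Finset.sum_const, smul_eq_mul,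
    Finset.card_erase_of_mem (Finset.mem_univ c), Finset.card_univ]
  ring

def prefW {C : Type*} [DecidableEq C] (w c : C) (ord : C → ℕ) (x y : C) : Prop :=
  x ≠ w ∧ (y = w ∨ x = c ∨ (y ≠ c ∧ ord x < ord y))

instance {C : Type*} [DecidableEq C] (w c : C) (ord : C → ℕ) (x y : C) :
    Decidable (prefW w c ord x y) := by unfold prefW; infer_instance

lemma prefW_asymm {C : Type*} [DecidableEq C] {w c : C} {ord : C → ℕ}
    (hinj : Function.Injective ord) {x y : C} (hxy : x ≠ y) :
    prefW w c ord x y ↔ ¬ prefW w c ord y x := by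
  have hne : ord x ≠ ord y := fun h => hxy (hinj h)
  unfold prefW
  by_cases h1 : x = w <;> by_cases h2 : y = w <;> by_cases h3 : x = c <;>
    by_cases h4 : y = c <;> simp_all <;> omega

def complW {C : Type*} [DecidableEq C] (n : ℕ) (μ : C → C → ℕ) (w c : C)
    (ord : C → ℕ) : C → C → ℕ :=
  fun x y => if x = y then 0 else if prefW w c ord x y then n - μ y x else μ x y


/-- Characterization of necessary Borda winners in a partial `n`-weighted
tournament: `w` is a necessary winner iff for every `c ≠ w`,
`Σ_{c'} μ(w,c') ≥ n(m-1) - Σ_{c'} μ(c',c)`, i.e. the minimal possible Borda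
score of `w` is at least the maximal possible Borda score of `c`. -/
theorem stmt15 {C : Type*} [Fintype C] [DecidableEq C] [Nonempty C]
    (n m : ℕ) (hn : 0 < n) (hm : Fintype.card C = m)
    (μ : C → C → ℕ) (hG : IsPartialW n μ) (w : C) :
    NWB n μ w ↔
      ∀ c : C, c ≠ w →
        n * (m - 1) - ∑ c' : C, μ c' c ≤ ∑ c' : C, μ w c' := by
  constructor
  · intro hN c0 hc0
    set ord : C → ℕ := fun x => ((Fintype.equivFin C) x : ℕ) with hord
    have hinj : Function.Injective ord :=
      Fin.val_injective.comp (Fintype.equivFin C).injective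
    set ν := complW n μ w c0 ord with hν
    have hext : ExtW μ ν := by
      intro x y
      by_cases h : x = y
      · subst h; simp [hν, complW, hG.1]
      · rw [hν]; unfold complW
        rw [if_neg h]
        by_cases hp : prefW w c0 ord x y
        · rw [if_pos hp]; have := hG.2 x y h; omega
        · rw [if_neg hp]
    have hcomp : IsCompleteW n ν := by
      refine ⟨fun x => by simp [hν, complW], fun x y hxy => ?_⟩
      have h1 := hG.2 x y hxy
      have hasym := prefW_asymm (w := w) (c := c0) hinj hxy
      rw [hν]; unfold complW
      rw [if_neg hxy, if_neg (Ne.symm hxy)]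
      by_cases hp : prefW w c0 ord x y
      · rw [if_pos hp, if_neg (hasym.mp hp)]; omega
      · have hp' : prefW w c0 ord y x := by
          by_contra hc; exact hp (hasym.mpr hc)
        rw [if_neg hp, if_pos hp']
        have := hG.2 y x hxy.symm; omega
    have hbw : bScore ν w = ∑ c' : C, μ w c' := by
      unfold bScore
      refine Finset.sum_congr rfl fun y _ => ?_
      by_cases h : w = y
      · subst h; simp [hν, complW, hG.1]
      · rw [hν]; unfold complW
        rw [if_neg h, if_neg]
        simp [prefW]
    have hcol : (∑ c' : C, ν c' c0) = ∑ c' : C, μ c' c0 := by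
      refine Finset.sum_congr rfl fun y _ => ?_
      by_cases h : y = c0
      · subst h; simp [hν, complW, hG.1]
      · rw [hν]; unfold complW
        rw [if_neg h, if_neg]
        rintro ⟨hyw, hcw | hyc | ⟨hcc, -⟩⟩
        · exact hc0 hcw
        · exact h hyc
        · exact hcc rfl
    have hsp := sumPairW hcomp c0
    have hb : bScore ν c0 ≤ bScore ν w := hN ν hext hcomp c0
    rw [hm] at hsp
    unfold bScore at hb hbw
    omega
  · intro h μ' hext hcomp c0
    by_cases hc : c0 = w
    · subst hc; exact le_refl _
    have hsp := sumPairW hcomp c0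
    have hS : (∑ c' : C, μ c' c0) ≤ ∑ c' : C, μ' c' c0 :=
      Finset.sum_le_sum fun i _ => hext i c0
    have hW : (∑ c' : C, μ w c') ≤ ∑ c' : C, μ' w c' :=
      Finset.sum_le_sum fun i _ => hext w i
    have hh := h c0 hc
    rw [hm] at hsp
    unfold bScore
    omega
end

section
/- Let G = (C, μ) be a complete n-weighted tournament with |C| = m candidates and let w ∈ Borda(G) be a Borda winner of G with Borda score σ_w. Then every minimal support X for w ∈ Borda(G) satisfies |X| ≥ (m − 1)(n(m − 1) − σ_w). -/
/-- Adversarial completion: minimize `w`'s score, maximize `c`'s score. -/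
private def adv {C : Type*} [DecidableEq C] (n : ℕ) (μ μX : C → C → ℕ) (w c : C) :
    C → C → ℕ := fun x y =>
  if x = y then 0
  else if x = w then μX w y
  else if y = w then n - μX w x
  else if x = c then n - μX y c
  else if y = c then μX x c
  else μ x y

/-- Lower bound on minimal supports for Borda:
`|X| ≥ (m-1)(n(m-1) - σ_w)`. -/
theorem stmt16 {C : Type*} [Fintype C] [DecidableEq C] [Nonempty C]
    (n m : ℕ) (hn : 0 < n) (hm : Fintype.card C = m)
    (μ : C → C → ℕ) (hG : IsCompleteW n μ)
    (w : C) (hw : InBorda μ w) (μX : C → C → ℕ) (hX : MSB n μ μX w) :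
    (m - 1) * (n * (m - 1) - bScore μ w) ≤ sizeW μX := by
  obtain ⟨hXle, hNW, -⟩ := hX
  have hμd : ∀ x : C, μX x x = 0 := fun x => by
    have := hXle x x; rw [hG.1 x] at this; omega
  have hs : ∀ x y : C, x ≠ y → μX x y + μX y x ≤ n := fun x y h => by
    have := add_le_add (hXle x y) (hXle y x)
    rw [hG.2 x y h] at this; exact this
  have key : ∀ c : C, c ≠ w → n * (m - 1) - bScore μ w ≤ ∑ y : C, μX y c := by
    intro c hc
    set μ' := adv n μ μX w c with hμ'
    -- μ' extends μX
    have hext : ExtW μX μ' := by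
      intro x y
      simp only [hμ', adv]
      split_ifs with h1 h2 h3 h4 h5
      · subst h1; exact (hμd x).le
      · subst h2; exact le_rfl
      · have := hs w x fun h => h1 (h3.trans h).symm; rw [h3]; omega
      · subst h4; have := hs x y h1; omega
      · subst h5; exact le_rfl
      · exact hXle x y
    -- μ' is complete
    have hcomp : IsCompleteW n μ' := by
      constructor
      · intro x; simp [hμ', adv]
      · intro x y hxy
        by_cases hxw : x = w
        · have hwy : w ≠ y := fun h => hxy (hxw.trans h)
          have := hs w y hwy
          simp only [hμ', adv]
          rw [if_neg hxy, if_pos hxw, if_neg (Ne.symm hxy),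
            if_neg (Ne.symm hwy), if_pos hxw]
          omega
        · by_cases hyw : y = w
          · have hwx : w ≠ x := fun h => hxy (h.symm.trans hyw.symm)
            have := hs w x hwx
            simp only [hμ', adv]
            rw [if_neg hxy, if_neg hxw, if_pos hyw, if_neg (Ne.symm hxy),
              if_pos hyw]
            omega
          · by_cases hxc : x = c
            · have hyc : y ≠ c := fun h => hxy (hxc.trans h.symm)
              have := hs y c hyc
              simp only [hμ', adv]
              rw [if_neg hxy, if_neg hxw, if_neg hyw, if_pos hxc,
                if_neg (Ne.symm hxy), if_neg hyw, if_neg hxw, if_neg hyc,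
                if_pos hxc]
              omega
            · by_cases hyc : y = c
              · have := hs x c hxc
                have hycw : y ≠ w := hyw
                simp only [hμ', adv]
                rw [if_neg hxy, if_neg hxw, if_neg hyw, if_neg hxc, if_pos hyc,
                  if_neg (Ne.symm hxy), if_neg hycw, if_neg hxw, if_pos hyc]
                omega
              · simp only [hμ', adv]
                rw [if_neg hxy, if_neg hxw, if_neg hyw, if_neg hxc, if_neg hyc,
                  if_neg (Ne.symm hxy), if_neg hyw, if_neg hxw, if_neg hyc,
                  if_neg hxc]
                exact hG.2 x y hxy
    -- value of μ' on `w`'s row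
    have hwb : ∀ y : C, μ' w y = μX w y := by
      intro y
      by_cases hyw : w = y
      · subst hyw; simp [hμ', adv, hμd]
      · simp [hμ', adv, hyw]
    -- value of μ' on `c`'s row
    have hub : ∀ y : C, μ' c y = if c = y then 0 else n - μX y c := by
      intro y
      by_cases hyc : c = y
      · subst hyc; simp [hμ', adv]
      · rw [if_neg hyc]
        by_cases hyw : y = w
        · subst hyw; simp [hμ', adv, hyc, hc]
        · simp [hμ', adv, hyc, hc, hyw]
    have e1 : bScore μ' w = bScore μX w := by
      unfold bScore; exact Finset.sum_congr rfl fun y _ => hwb y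
    have e2 : (∑ _y ∈ Finset.univ.erase c, n) =
        bScore μ' c + ∑ y ∈ Finset.univ.erase c, μX y c := by
      unfold bScore
      rw [← Finset.sum_erase_add _ _ (Finset.mem_univ c), hub c, if_pos rfl,
        add_zero, ← Finset.sum_add_distrib]
      refine Finset.sum_congr rfl fun y hy => ?_
      have hyc : y ≠ c := Finset.ne_of_mem_erase hy
      rw [hub y, if_neg (Ne.symm hyc)]
      have := hs y c hyc
      omega
    have e3 : (∑ _y ∈ Finset.univ.erase c, n) = n * (m - 1) := by
      rw [Finset.sum_const, Finset.card_erase_of_mem (Finset.mem_univ c),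
        Finset.card_univ, hm, smul_eq_mul, mul_comm]
    have hscore : bScore μ' c ≤ bScore μ' w := hNW μ' hext hcomp c
    have hXw : bScore μX w ≤ bScore μ w :=
      Finset.sum_le_sum fun y _ => hXle w y
    have hcol : ∑ y ∈ Finset.univ.erase c, μX y c ≤ ∑ y : C, μX y c :=
      Finset.sum_le_sum_of_subset (Finset.subset_univ _)
    set K := n * (m - 1)
    omega
  calc (m - 1) * (n * (m - 1) - bScore μ w)
      = ∑ _c ∈ Finset.univ.erase w, (n * (m - 1) - bScore μ w) := by
        rw [Finset.sum_const, Finset.card_erase_of_mem (Finset.mem_univ w),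
          Finset.card_univ, hm, smul_eq_mul]
    _ ≤ ∑ c ∈ Finset.univ.erase w, ∑ y : C, μX y c :=
        Finset.sum_le_sum fun c hc => key c (Finset.ne_of_mem_erase hc)
    _ ≤ ∑ c : C, ∑ y : C, μX y c :=
        Finset.sum_le_sum_of_subset (Finset.subset_univ _)
    _ = sizeW μX := by unfold sizeW; exact Finset.sum_comm
end

section
/- Let G = (C, μ) be a complete n-weighted tournament with |C| = m ≥ 3 candidates and let w ∈ Borda(G) be a Borda winner of G. Then every minimal support X for w ∈ Borda(G) satisfies |X| ≥ n(m − 1) − ⌊n(1 − 1/m)⌋, i.e., |X| ≥ ⌈n(m − 1)²/m⌉. -/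
/-- Lower bound on minimal supports for Borda when `m ≥ 3`:
`|X| ≥ n(m-1) - ⌊n(1-1/m)⌋`, i.e. `|X| ≥ ⌈n(m-1)²/m⌉`
(note `⌊n(1-1/m)⌋ = ⌊n(m-1)/m⌋`). -/
theorem stmt17 {C : Type*} [Fintype C] [DecidableEq C] [Nonempty C]
    (n m : ℕ) (hn : 0 < n) (hm : Fintype.card C = m) (hm3 : 3 ≤ m)
    (μ : C → C → ℕ) (hG : IsCompleteW n μ)
    (w : C) (hw : InBorda μ w) (μX : C → C → ℕ) (hX : MSB n μ μX w) :
    n * (m - 1) - n * (m - 1) / m ≤ sizeW μX ∧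
    (n * (m - 1) ^ 2 + m - 1) / m ≤ sizeW μX := by
  obtain ⟨hXμ, hNW, -⟩ := hX
  obtain ⟨hμd, hμc⟩ := hG
  have hpart : ∀ x y : C, x ≠ y → μX x y + μX y x ≤ n := fun x y hxy => by
    have h0 := hμc x y hxy; have h1 := hXμ x y; have h2 := hXμ y x; omega
  have hdiag : ∀ x, μX x x = 0 := fun x => by
    have h1 := hXμ x x; have h2 := hμd x; omega
  have hle : ∀ x y : C, μX x y ≤ n := fun x y => by
    rcases eq_or_ne x y with h | h
    · rw [h, hdiag]; omega
    · have := hpart x y h; omega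
  set e : C → ℕ := fun x => ((Fintype.equivFin C) x : ℕ) with he
  have einj : ∀ x y : C, x ≠ y → e x ≠ e y := by
    intro x y hxy hxy'
    exact hxy ((Fintype.equivFin C).injective (Fin.ext hxy'))
  have key : ∀ c : C, c ≠ w → n * (m - 1) ≤ bScore μX w + ∑ x : C, μX x c := by
    intro c hcw
    classical
    set μ' : C → C → ℕ := fun x y =>
      if x = y then 0 else if x = c then n - μX y c else if y = c then μX x c
      else if y = w then n - μX w x else if x = w then μX w y
      else if e x < e y then n - μX y x else μX x y with hμ'
    have hμ'xy : ∀ x y : C, μ' x y =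
      (if x = y then 0 else if x = c then n - μX y c else if y = c then μX x c
      else if y = w then n - μX w x else if x = w then μX w y
      else if e x < e y then n - μX y x else μX x y) := fun x y => rfl
    have hext : ExtW μX μ' := by
      intro x y
      rcases eq_or_ne x y with h1 | h1
      · rw [h1, hdiag]; omega
      rw [hμ'xy, if_neg h1]
      rcases eq_or_ne x c with h2 | h2
      · rw [if_pos h2]
        have hp := hpart x y h1
        rw [h2] at hp ⊢
        omega
      rw [if_neg h2]
      rcases eq_or_ne y c with h3 | h3
      · rw [if_pos h3, h3]
      rw [if_neg h3]
      rcases eq_or_ne y w with h4 | h4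
      · rw [if_pos h4]
        have hp := hpart x y h1
        rw [h4] at hp ⊢
        omega
      rw [if_neg h4]
      rcases eq_or_ne x w with h5 | h5
      · rw [if_pos h5, h5]
      rw [if_neg h5]
      rcases lt_or_ge (e x) (e y) with h6 | h6
      · rw [if_pos h6]; have hp := hpart x y h1; omega
      · rw [if_neg (not_lt.mpr h6)]
    have hd' : ∀ x, μ' x x = 0 := fun x => by rw [hμ'xy, if_pos rfl]
    have hcomp2 : ∀ x y : C, x ≠ y → μ' x y + μ' y x = n := by
      intro x y h1
      have h1' : y ≠ x := h1.symm
      have hwc : w ≠ c := Ne.symm hcw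
      rcases eq_or_ne x c with h2 | h2
      · have h3 : y ≠ c := by rw [← h2]; exact h1'
        rw [hμ'xy, hμ'xy, if_neg h1, if_pos h2, if_neg h1', if_neg h3, if_pos h2]
        have := hle y c; omega
      rcases eq_or_ne y c with h3 | h3
      · rw [hμ'xy, hμ'xy, if_neg h1, if_neg h2, if_pos h3, if_neg h1', if_pos h3]
        have := hle x c; omega
      rcases eq_or_ne y w with h4 | h4
      · have h5 : x ≠ w := by rw [← h4]; exact h1
        rw [hμ'xy, hμ'xy, if_neg h1, if_neg h2, if_neg h3, if_pos h4,
          if_neg h1', if_neg h3, if_neg h2, if_neg h5, if_pos h4]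
        have := hle w x; omega
      rcases eq_or_ne x w with h5 | h5
      · rw [hμ'xy, hμ'xy, if_neg h1, if_neg h2, if_neg h3, if_neg h4, if_pos h5,
          if_neg h1', if_neg h3, if_neg h2, if_pos h5]
        have := hle w y; omega
      rcases lt_trichotomy (e x) (e y) with h6 | h6 | h6
      · rw [hμ'xy, hμ'xy, if_neg h1, if_neg h2, if_neg h3, if_neg h4, if_neg h5,
          if_pos h6, if_neg h1', if_neg h3, if_neg h2, if_neg h5, if_neg h4,
          if_neg (by omega : ¬ e y < e x)]
        have := hle y x; omega
      · exact absurd h6 (einj x y h1)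
      · rw [hμ'xy, hμ'xy, if_neg h1, if_neg h2, if_neg h3, if_neg h4, if_neg h5,
          if_neg (by omega : ¬ e x < e y), if_neg h1', if_neg h3, if_neg h2,
          if_neg h5, if_neg h4, if_pos h6]
        have := hle x y; omega
    have hIB : InBorda μ' w := hNW μ' hext ⟨hd', hcomp2⟩
    have hb := hIB c
    have hwc : w ≠ c := Ne.symm hcw
    have hμ'w : ∀ y, μ' w y = μX w y := by
      intro y
      rcases eq_or_ne y w with h1 | h1
      · rw [h1, hμ'xy, if_pos rfl, hdiag]
      rcases eq_or_ne y c with h2 | h2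
      · rw [hμ'xy, if_neg (Ne.symm h1), if_neg hwc, if_pos h2, h2]
      · rw [hμ'xy, if_neg (Ne.symm h1), if_neg hwc, if_neg h2, if_neg h1, if_pos rfl]
    have hbw : bScore μ' w = bScore μX w := by
      unfold bScore; exact Finset.sum_congr rfl fun y _ => hμ'w y
    have hbc : bScore μ' c + ∑ x : C, μX x c = (m - 1) * n := by
      have hterm : ∀ y : C, μ' c y + μX y c = if y = c then 0 else n := by
        intro y
        rcases eq_or_ne y c with h1 | h1
        · rw [if_pos h1, h1, hdiag, hμ'xy, if_pos rfl]
        · rw [if_neg h1, hμ'xy, if_neg (Ne.symm h1), if_pos rfl]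
          have := hle y c; omega
      have hsplit : bScore μ' c + ∑ x : C, μX x c = ∑ y : C, (μ' c y + μX y c) := by
        unfold bScore; rw [Finset.sum_add_distrib]
      rw [hsplit, Finset.sum_congr rfl fun y _ => hterm y,
        ← Finset.sum_erase_add _ _ (Finset.mem_univ c), if_pos rfl, add_zero,
        Finset.sum_congr rfl (fun y hy => if_neg (Finset.ne_of_mem_erase hy)),
        Finset.sum_const, Finset.card_erase_of_mem (Finset.mem_univ c),
        Finset.card_univ, hm, smul_eq_mul]
    calc n * (m - 1) = (m - 1) * n := Nat.mul_comm _ _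
      _ = bScore μ' c + ∑ x : C, μX x c := hbc.symm
      _ ≤ bScore μ' w + ∑ x : C, μX x c := Nat.add_le_add_right hb _
      _ = bScore μX w + ∑ x : C, μX x c := by rw [hbw]
  -- Sum the key inequality over all c ≠ w
  have hColsum : ∑ c : C, ∑ x : C, μX x c = sizeW μX := by
    unfold sizeW; exact Finset.sum_comm
  have hSle : bScore μX w ≤ sizeW μX := by
    unfold sizeW bScore
    exact Finset.single_le_sum (f := fun x => ∑ y : C, μX x y) (fun x _ => Nat.zero_le _) (Finset.mem_univ w)
  have key2 : n * (m - 1) * (m - 1) ≤ m * sizeW μX := by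
    have h1 : ∑ c ∈ Finset.univ.erase w, (n * (m - 1)) ≤
        ∑ c ∈ Finset.univ.erase w, (bScore μX w + ∑ x : C, μX x c) :=
      Finset.sum_le_sum fun c hc => key c (Finset.ne_of_mem_erase hc)
    rw [Finset.sum_const, Finset.card_erase_of_mem (Finset.mem_univ w),
      Finset.card_univ, hm, smul_eq_mul, Finset.sum_add_distrib,
      Finset.sum_const, Finset.card_erase_of_mem (Finset.mem_univ w),
      Finset.card_univ, hm, smul_eq_mul] at h1
    have h2 : ∑ c ∈ Finset.univ.erase w, ∑ x : C, μX x c ≤ sizeW μX := by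
      rw [← hColsum]
      exact Finset.sum_le_sum_of_subset (Finset.erase_subset _ _)
    have hm1 : m - 1 + 1 = m := by omega
    calc n * (m - 1) * (m - 1) = (m - 1) * (n * (m - 1)) := by ring
      _ ≤ (m - 1) * bScore μX w + ∑ c ∈ Finset.univ.erase w, ∑ x : C, μX x c := h1
      _ ≤ (m - 1) * sizeW μX + sizeW μX :=
          Nat.add_le_add (Nat.mul_le_mul_left _ hSle) h2
      _ = (m - 1 + 1) * sizeW μX := by ring
      _ = m * sizeW μX := by rw [hm1]
  constructor
  · -- part 1
    set s := sizeW μX with hs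
    set K := n * (m - 1) with hK
    have hdm : m * (K / m) + K % m = K := Nat.div_add_mod K m
    have hmod : K % m < m := Nat.mod_lt K (by omega)
    by_contra hcon
    push_neg at hcon
    have hqK : K / m ≤ K := Nat.div_le_self _ _
    have h3 : s + K / m + 1 ≤ K := by omega
    have h4 : m * (s + K / m + 1) ≤ m * K := Nat.mul_le_mul_left _ h3
    have hm1 : m - 1 + 1 = m := by omega
    have h5 : m * K = K * (m - 1) + K := by
      calc m * K = K * (m - 1 + 1) := by rw [hm1, Nat.mul_comm]
        _ = K * (m - 1) + K := by ring
    have h6 : K * (m - 1) ≤ m * s := by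
      calc K * (m - 1) = n * (m - 1) * (m - 1) := by rw [hK]
        _ ≤ m * sizeW μX := key2
        _ = m * s := by rw [hs]
    have h8 : m * (s + K / m + 1) = m * s + m * (K / m) + m := by ring
    linarith
  · -- part 2
    have h10 : n * (m - 1) ^ 2 ≤ m * sizeW μX := by
      calc n * (m - 1) ^ 2 = n * (m - 1) * (m - 1) := by ring
        _ ≤ m * sizeW μX := key2
    rw [Nat.div_le_iff_le_mul_add_pred (by omega : 0 < m)]
    generalize hA : n * (m - 1) ^ 2 = A at h10 ⊢
    generalize hB : m * sizeW μX = B at h10 ⊢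
    omega
end

section
/- Let G = (C, μ) be a complete n-weighted tournament with |C| = m candidates and let w ∈ Borda(G) be a Borda winner of G. Then every minimal support X for w ∈ Borda(G) satisfies |X| ≥ n(m − 1) − min_{c ≠ w} μ(w, c). -/
/-- Lower bound on minimal supports for Borda:
`|X| ≥ n(m-1) - min_{c≠w} μ(w,c)`. -/
theorem stmt18 {C : Type*} [Fintype C] [DecidableEq C] [Nonempty C]
    (n m : ℕ) (hn : 0 < n) (hm : Fintype.card C = m)
    (μ : C → C → ℕ) (hG : IsCompleteW n μ)
    (w : C) (hw : InBorda μ w) (μX : C → C → ℕ) (hX : MSB n μ μX w) :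
    n * (m - 1) - minOpp μ w ≤ sizeW μX := by
  classical
  by_cases hex : ∃ c : C, c ≠ w
  · -- nontrivial case
    obtain ⟨c0, hc0⟩ := hex
    have hS : {k : ℕ | ∃ c : C, c ≠ w ∧ μ w c = k}.Nonempty := ⟨μ w c0, c0, hc0, rfl⟩
    obtain ⟨c, hcw, hc⟩ := Nat.sInf_mem hS
    have hmin : minOpp μ w = μ w c := by rw [minOpp, hc]
    have hXle : ∀ a b : C, μX a b ≤ μ a b := hX.1
    have hμdiag : ∀ a : C, μ a a = 0 := hG.1
    have hXdiag : ∀ a : C, μX a a = 0 := fun a =>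
      Nat.le_antisymm (by simpa [hμdiag a] using hXle a a) (Nat.zero_le _)
    have key : ∀ a b : C, μX a b + μX b a ≤ n := by
      intro a b
      by_cases h : a = b
      · subst h; simp [hXdiag a]
      · exact le_trans (add_le_add (hXle a b) (hXle b a)) (hG.2 a b h).le
    set μ' : C → C → ℕ := fun x y =>
      if x = y then 0
      else if y = w then n - μX w x
      else if x = w then μX w y
      else if x = c then n - μX y c
      else if y = c then μX x c
      else μ x y with hμ'def
    have hext : ExtW μX μ' := by
      intro x y
      have k1 := key w x
      have k2 := key w y
      have k3 := key y c
      have k4 := key x c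
      have d1 := hXdiag x
      have d2 := hXdiag y
      have h1 := hXle x y
      simp only [hμ'def]
      split_ifs <;> subst_vars <;> first | omega | simp_all
    have hcomp : IsCompleteW n μ' := by
      constructor
      · intro x; simp [hμ'def]
      · intro x y hxy
        have k1 := key w x
        have k2 := key w y
        have k3 := key y c
        have k4 := key x c
        have k5 := key x y
        have e1 := hG.2 x y hxy
        simp only [hμ'def]
        split_ifs <;> subst_vars <;> first | omega | simp_all
    have hkey : bScore μ' c ≤ bScore μ' w := hX.2.1 μ' hext hcomp c
    -- w's score in μ' is at most the row sum of μX at w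
    have hw1 : bScore μ' w ≤ ∑ y : C, μX w y := by
      refine Finset.sum_le_sum fun y _ => ?_
      by_cases h : w = y
      · subst h; simp [hμ'def]
      · simp [hμ'def, h, (Ne.symm h : y ≠ w)]
    -- c's score in μ'
    have hc' : ∀ y : C, y ≠ c → μ' c y = n - μX y c := by
      intro y hy
      by_cases hyw : y = w
      · subst hyw; simp [hμ'def, hcw]
      · simp [hμ'def, (Ne.symm hy : ¬ c = y), hyw, hcw]
    have h2 : ∀ y ∈ Finset.univ.erase c, n ≤ μ' c y + μX y c := by
      intro y hy
      have hyc : y ≠ c := Finset.ne_of_mem_erase hy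
      have k := key y c
      rw [hc' y hyc]
      omega
    have hcard : (Finset.univ.erase c).card = m - 1 := by
      rw [Finset.card_erase_of_mem (Finset.mem_univ c), Finset.card_univ, hm]
    have h3 : n * (m - 1) ≤ bScore μ' c + ∑ y ∈ Finset.univ.erase c, μX y c := by
      calc n * (m - 1) = ∑ _y ∈ Finset.univ.erase c, n := by
            rw [Finset.sum_const, hcard, smul_eq_mul, mul_comm]
        _ ≤ ∑ y ∈ Finset.univ.erase c, (μ' c y + μX y c) := Finset.sum_le_sum h2
        _ = (∑ y ∈ Finset.univ.erase c, μ' c y) + ∑ y ∈ Finset.univ.erase c, μX y c :=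
            Finset.sum_add_distrib
        _ ≤ bScore μ' c + ∑ y ∈ Finset.univ.erase c, μX y c := by
            gcongr
            exact Finset.sum_le_sum_of_subset (Finset.erase_subset c Finset.univ)
    have h4 : ∑ y ∈ Finset.univ.erase c, μX y c
        ≤ μX w c + ∑ x ∈ Finset.univ.erase w, μX x c := by
      have hwmem : w ∈ Finset.univ.erase c :=
        Finset.mem_erase_of_ne_of_mem (Ne.symm hcw) (Finset.mem_univ w)
      rw [← Finset.add_sum_erase _ _ hwmem]
      refine Nat.add_le_add_left (Finset.sum_le_sum_of_subset ?_) _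
      exact Finset.erase_subset_erase w (Finset.erase_subset c Finset.univ)
    have h5 : (∑ y : C, μX w y) + ∑ x ∈ Finset.univ.erase w, μX x c ≤ sizeW μX := by
      rw [sizeW]
      conv_rhs => rw [← Finset.add_sum_erase _ (fun x => ∑ y : C, μX x y) (Finset.mem_univ w)]
      refine Nat.add_le_add_left (Finset.sum_le_sum fun x _ => ?_) _
      exact Finset.single_le_sum (fun y _ => Nat.zero_le _) (Finset.mem_univ c)
    have hwc : μX w c ≤ μ w c := hXle w c
    have hfin : n * (m - 1) ≤ sizeW μX + μ w c := by omega
    omega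
  · -- all candidates equal w
    push_neg at hex
    have h1 : Fintype.card C = 1 := Fintype.card_eq_one_iff.mpr ⟨w, fun x => hex x⟩
    have hm1 : m = 1 := by omega
    subst hm1
    simp
end

section
/- Let G = (C, μ) be a complete n-weighted tournament and let w ∈ Borda(G) be a Borda winner of G. Then there exists a smallest minimal support X = (C, μ_X) for w ∈ Borda(G) such that either X consists only of pairwise comparisons won by w (i.e., μ_X(c, c') = 0 whenever c ≠ w), or X contains all pairwise comparisons won by w in G (i.e., μ_X(w, c) = μ(w, c) for every c ∈ C). -/
namespace Stmt19Aux

variable {C : Type*} [Fintype C] [DecidableEq C]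

/-- in-weight of column `c` (excluding the diagonal). -/
def colW (μX : C → C → ℕ) (c : C) : ℕ := ∑ c' ∈ Finset.univ.erase c, μX c' c

lemma bScore_eq (μX : C → C → ℕ) (c : C) (h : μX c c = 0) :
    bScore μX c = ∑ c' ∈ Finset.univ.erase c, μX c c' := by
  rw [bScore, ← Finset.add_sum_erase Finset.univ _ (Finset.mem_univ c), h, zero_add]

lemma score_col (n : ℕ) (ν : C → C → ℕ) (hd : ∀ x, ν x x = 0)
    (hc : ∀ x y : C, x ≠ y → ν x y + ν y x = n) (c : C) :
    bScore ν c + (∑ c' ∈ Finset.univ.erase c, ν c' c) = (Finset.univ.erase c).card * n := by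
  rw [bScore_eq ν c (hd c), ← Finset.sum_add_distrib,
    Finset.sum_congr rfl (fun y hy => hc c y (Finset.ne_of_mem_erase hy).symm)]
  simp [mul_comm]

/-- Characterization of necessary Borda winner for subtournaments of a complete `μ`. -/
lemma nwb_iff (n : ℕ) (μ μX : C → C → ℕ) (hG : IsCompleteW n μ) (hext : ExtW μX μ) (w : C) :
    NWB n μX w ↔
      ∀ c : C, c ≠ w → (Finset.univ.erase c).card * n ≤ bScore μX w + colW μX c := by
  obtain ⟨hd, hc⟩ := hG
  have hXd : ∀ x, μX x x = 0 := fun x => Nat.le_zero.mp (hd x ▸ hext x x)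
  have hXp : ∀ x y : C, x ≠ y → μX x y + μX y x ≤ n := fun x y hxy =>
    (hc x y hxy) ▸ Nat.add_le_add (hext x y) (hext y x)
  constructor
  · intro h c hcw
    classical
    set μ' : C → C → ℕ := fun x y =>
      if x = y then 0
      else if x = w then μX w y
      else if y = w then n - μX w x
      else if y = c then μX x c
      else if x = c then n - μX y c
      else μ x y with hμ'
    have E0 : ∀ x, μ' x x = 0 := by intro x; simp [hμ']
    have E1 : ∀ y, μ' w y = μX w y := by
      intro y
      by_cases h1 : w = y
      · rw [hμ']; simp only [if_pos h1]; rw [← h1, hXd]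
      · rw [hμ']; simp only [if_neg h1, if_pos rfl]; simp
    have E2 : ∀ x, x ≠ w → μ' x w = n - μX w x := by
      intro x hx
      rw [hμ']
      simp only [if_neg hx, if_neg (show ¬ (x = w) from hx), if_pos rfl]
      simp
    have E3 : ∀ x, x ≠ w → x ≠ c → μ' x c = μX x c := by
      intro x h1 h2
      rw [hμ']
      simp only [if_neg h2, if_neg h1, if_neg (show ¬ (c = w) from hcw), if_pos rfl]
      simp
    have E4 : ∀ y, y ≠ w → y ≠ c → μ' c y = n - μX y c := by
      intro y h1 h2
      rw [hμ']
      simp only [if_neg (show ¬ (c = y) from fun hh => h2 hh.symm), if_neg hcw,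
        if_neg (show ¬ (y = w) from h1), if_neg (show ¬ (y = c) from h2), if_pos rfl]
      simp
    have E5 : ∀ x y, x ≠ y → x ≠ w → y ≠ w → x ≠ c → y ≠ c → μ' x y = μ x y := by
      intro x y h1 h2 h3 h4 h5
      rw [hμ']
      simp only [if_neg h1, if_neg h2, if_neg h3, if_neg h5, if_neg h4]
    have hext' : ExtW μX μ' := by
      intro x y
      by_cases hxy : x = y
      · rw [hxy, E0, hXd]
      · by_cases hxw : x = w
        · rw [hxw] at hxy ⊢; rw [E1]
        · by_cases hyw : y = w
          · rw [hyw] at hxy ⊢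
            rw [E2 x hxw]
            have := hXp w x (Ne.symm hxw)
            omega
          · by_cases hyc : y = c
            · rw [hyc] at hxy ⊢; rw [E3 x hxw (by rw [← hyc] at hxy ⊢; exact hxy)]
            · by_cases hxc : x = c
              · rw [hxc] at hxy ⊢
                rw [E4 y hyw hyc]
                have := hXp y c (fun hh => hxy hh.symm)
                omega
              · rw [E5 x y hxy hxw hyw hxc hyc]; exact hext x y
    have hcomp : IsCompleteW n μ' := by
      refine ⟨E0, fun x y hxy => ?_⟩
      have hyx : y ≠ x := Ne.symm hxy
      by_cases hxw : x = w
      · rw [hxw] at hxy ⊢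
        rw [E1, E2 y (Ne.symm hxy)]
        have h1 := hc w y hxy
        have h2 := hext w y
        omega
      · by_cases hyw : y = w
        · rw [hyw] at hyx ⊢
          rw [E1, E2 x hxw]
          have h1 := hc w x hyx
          have h2 := hext w x
          omega
        · by_cases hyc : y = c
          · have hxc : x ≠ c := fun hh => hxy (hh.trans hyc.symm)
            have e1 : μ' x c = μX x c := E3 x hxw hxc
            have e2 : μ' c x = n - μX x c := E4 x hxw hxc
            rw [hyc, e1, e2]
            have h1 := hc x c hxc
            have h2 := hext x c
            omega
          · by_cases hxc : x = c
            · have hyc' : y ≠ c := hyc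
              have e1 : μ' c y = n - μX y c := E4 y hyw hyc'
              have e2 : μ' y c = μX y c := E3 y hyw hyc'
              rw [hxc, e1, e2]
              have h1 := hc y c hyc'
              have h2 := hext y c
              omega
            · rw [E5 x y hxy hxw hyw hxc hyc, E5 y x hyx hyw hxw hyc hxc]
              exact hc x y hxy
    have hB := h μ' hext' hcomp c
    have hww : bScore μ' w = bScore μX w :=
      Finset.sum_congr rfl fun y _ => E1 y
    have hcc : bScore μ' c + colW μX c = (Finset.univ.erase c).card * n := by
      rw [bScore_eq μ' c (E0 c), colW, ← Finset.sum_add_distrib]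
      have hstep : ∀ y ∈ Finset.univ.erase c, μ' c y + μX y c = n := by
        intro y hy
        have hyc : y ≠ c := Finset.ne_of_mem_erase hy
        have hle : μX y c ≤ n := le_trans (hext y c) (by have := hc y c hyc; omega)
        by_cases hyw : y = w
        · have hcw' : μ' c w = n - μX w c := E2 c hcw
          rw [hyw, hcw']
          rw [hyw] at hle
          omega
        · rw [E4 y hyw hyc]
          omega
      rw [Finset.sum_congr rfl hstep]
      simp [mul_comm]
    rw [hww] at hB
    omega
  · intro h μ' hext' hcomp c'
    by_cases hcw : c' = w
    · rw [hcw]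
    · have h1 := score_col n μ' hcomp.1 hcomp.2 c'
      have h2 : colW μX c' ≤ ∑ y ∈ Finset.univ.erase c', μ' y c' :=
        Finset.sum_le_sum fun y _ => hext' y c'
      have h3 : bScore μX w ≤ bScore μ' w := Finset.sum_le_sum fun y _ => hext' w y
      have h4 := h c' hcw
      omega


set_option linter.unusedSectionVars false in
/-- strict pointwise-dominated sizes -/
lemma sizeW_lt (μY μX : C → C → ℕ) (hle : ExtW μY μX) (hne : μY ≠ μX) :
    sizeW μY < sizeW μX := by
  have : ∃ a b, μY a b < μX a b := by
    by_contra hcon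
    push_neg at hcon
    exact hne (funext fun a => funext fun b => le_antisymm (hle a b) (hcon a b))
  obtain ⟨a, b, hab⟩ := this
  refine Finset.sum_lt_sum (fun x _ => Finset.sum_le_sum fun y _ => hle x y) ⟨a, Finset.mem_univ a, ?_⟩
  exact Finset.sum_lt_sum (fun y _ => hle a y) ⟨b, Finset.mem_univ b, hab⟩

end Stmt19Aux

open Stmt19Aux in
/-- There is a smallest minimal support for a Borda winner `w` that either
consists only of pairwise comparisons won by `w`, or contains all pairwise
comparisons won by `w` in `G`. -/
theorem stmt19 {C : Type*} [Fintype C] [DecidableEq C] [Nonempty C]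
    (n : ℕ) (hn : 0 < n)
    (μ : C → C → ℕ) (hG : IsCompleteW n μ) (w : C) (hw : InBorda μ w) :
    ∃ μX : C → C → ℕ, SMSB n μ μX w ∧
      ((∀ c c' : C, c ≠ w → μX c c' = 0) ∨ (∀ c : C, μX w c = μ w c)) := by
  classical
  obtain ⟨hd, hc⟩ := hG
  have hGW : IsCompleteW n μ := ⟨hd, hc⟩
  -- the qualifying predicate
  set P : (C → C → ℕ) → Prop := fun ν => ExtW ν μ ∧
    ∀ c : C, c ≠ w → (Finset.univ.erase c).card * n ≤ bScore ν w + colW ν c with hP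
  have hPμ : P μ := by
    refine ⟨fun x y => le_rfl, fun c hcw => ?_⟩
    have h1 := score_col n μ hd hc c
    have h2 : bScore μ c ≤ bScore μ w := hw c
    unfold colW
    omega
  -- minimal size
  set S : Set ℕ := {k | ∃ ν, P ν ∧ sizeW ν = k} with hS
  have hSne : S.Nonempty := ⟨sizeW μ, μ, hPμ, rfl⟩
  obtain ⟨μ0, hPμ0, hμ0⟩ := Nat.sInf_mem hSne
  set s := sInf S with hs
  -- minimal off-row weight among minimal size
  set R : (C → C → ℕ) → ℕ := fun ν => ∑ x ∈ Finset.univ.erase w, ∑ y, ν x y with hR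
  set T : Set ℕ := {k | ∃ ν, P ν ∧ sizeW ν = s ∧ R ν = k} with hT
  have hTne : T.Nonempty := ⟨R μ0, μ0, hPμ0, hμ0, rfl⟩
  obtain ⟨μX, hPX, hsX, hrX⟩ := Nat.sInf_mem hTne
  obtain ⟨hXext, hXnwb'⟩ := hPX
  have hXd : ∀ x, μX x x = 0 := fun x => Nat.le_zero.mp (hd x ▸ hXext x x)
  have hXnwb : NWB n μX w := (nwb_iff n μ μX hGW hXext w).mpr hXnwb'
  refine ⟨μX, ⟨⟨hXext, hXnwb, ?_⟩, ?_⟩, ?_⟩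
  · -- minimality
    intro μY hYle hYne hYnwb
    have hYext : ExtW μY μ := fun x y => le_trans (hYle x y) (hXext x y)
    have hYP : P μY := ⟨hYext, (nwb_iff n μ μY hGW hYext w).mp hYnwb⟩
    have : s ≤ sizeW μY := Nat.sInf_le (show sizeW μY ∈ S from ⟨μY, hYP, rfl⟩)
    have := sizeW_lt μY μX hYle hYne
    omega
  · -- smallest
    intro μY hMSB
    obtain ⟨hYext, hYnwb, _⟩ := hMSB
    have : s ≤ sizeW μY :=
      Nat.sInf_le (show sizeW μY ∈ S from
        ⟨μY, ⟨hYext, (nwb_iff n μ μY hGW hYext w).mp hYnwb⟩, rfl⟩)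
    omega
  · -- structure
    by_cases h1 : ∀ c c' : C, c ≠ w → μX c c' = 0
    · exact Or.inl h1
    by_cases h2 : ∀ c : C, μX w c = μ w c
    · exact Or.inr h2
    exfalso
    push_neg at h1 h2
    obtain ⟨c, c', hcw, hcc'⟩ := h1
    obtain ⟨c0, hc0⟩ := h2
    have hc0lt : μX w c0 < μ w c0 := lt_of_le_of_ne (hXext w c0) hc0
    have hc0w : c0 ≠ w := by
      intro hh; rw [hh] at hc0lt; rw [hd w] at hc0lt; omega
    have hcc : c ≠ c' := by
      intro hh; rw [hh] at hcc'; exact hcc' (hXd c')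
    -- first: c' ≠ w, else size can be decreased
    have hc'w : c' ≠ w := by
      intro hc'w
      -- decrease μX c c' = μX c w by one: still qualifies, smaller size
      set μY : C → C → ℕ := fun x y => if x = c ∧ y = c' then μX c c' - 1 else μX x y with hμY
      have hYle : ExtW μY μX := by
        intro x y
        rw [hμY]
        dsimp only
        split_ifs with hh
        · rw [hh.1, hh.2]; omega
        · exact le_rfl
      have hYext : ExtW μY μ := fun x y => le_trans (hYle x y) (hXext x y)
      have hYw : ∀ y, μY w y = μX w y := by
        intro y
        rw [hμY]
        dsimp only
        rw [if_neg (fun hh => hcw hh.1.symm)]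
      have hYcol : ∀ d, d ≠ w → colW μY d = colW μX d := by
        intro d hdw
        refine Finset.sum_congr rfl fun x _ => ?_
        rw [hμY]
        dsimp only
        rw [if_neg (fun hh : x = c ∧ d = c' => hdw (hh.2.trans hc'w))]
      have hYP : P μY := by
        refine ⟨hYext, fun d hdw => ?_⟩
        have := hXnwb' d hdw
        have hb : bScore μY w = bScore μX w := Finset.sum_congr rfl fun y _ => hYw y
        rw [hb, hYcol d hdw]
        exact this
      have hYlt : sizeW μY < sizeW μX := by
        refine sizeW_lt μY μX hYle ?_
        intro hh
        have h2 : μY c c' = μX c c' - 1 := by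
          rw [hμY]; dsimp only
          rw [if_pos (show c = c ∧ c' = c' from ⟨rfl, rfl⟩)]
        have h3 := congrFun (congrFun hh c) c'
        have h4 : μX c c' ≠ 0 := hcc'
        omega
      have : s ≤ sizeW μY := Nat.sInf_le (show sizeW μY ∈ S from ⟨μY, hYP, rfl⟩)
      omega
    -- the swap
    set μY : C → C → ℕ := fun x y =>
      if x = w ∧ y = c0 then μX w c0 + 1
      else if x = c ∧ y = c' then μX c c' - 1
      else μX x y with hμY
    have hne1 : ¬ (c = w ∧ c' = c0) := fun hh => hcw hh.1
    have hYval1 : μY w c0 = μX w c0 + 1 := by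
      rw [hμY]; dsimp only; rw [if_pos ⟨rfl, rfl⟩]
    have hYval2 : μY c c' = μX c c' - 1 := by
      rw [hμY]; dsimp only
      rw [if_neg (fun hh : c = w ∧ c' = c0 => hcw hh.1), if_pos ⟨rfl, rfl⟩]
    have hYother : ∀ x y, ¬(x = w ∧ y = c0) → ¬(x = c ∧ y = c') → μY x y = μX x y := by
      intro x y hA hB
      rw [hμY]; dsimp only
      rw [if_neg hA, if_neg hB]
    have hYext : ExtW μY μ := by
      intro x y
      by_cases hA : x = w ∧ y = c0
      · rw [hA.1, hA.2, hYval1]; omega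
      · by_cases hB : x = c ∧ y = c'
        · rw [hB.1, hB.2, hYval2]
          have := hXext c c'
          omega
        · rw [hYother x y hA hB]; exact hXext x y
    have hone : 1 ≤ μX c c' := Nat.one_le_iff_ne_zero.mpr hcc'
    -- row w score increases by one
    have hbY : bScore μY w = bScore μX w + 1 := by
      have hpt : ∀ y, μY w y = μX w y + if y = c0 then 1 else 0 := by
        intro y
        by_cases hy : y = c0
        · rw [hy, hYval1, if_pos rfl]
        · rw [if_neg hy, hYother w y (fun hh => hy hh.2) (fun hh => hcw hh.1.symm)]
          omega
      unfold bScore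
      rw [Finset.sum_congr rfl fun y _ => hpt y, Finset.sum_add_distrib,
        Finset.sum_ite_eq' Finset.univ c0 (fun _ => (1:ℕ)), if_pos (Finset.mem_univ c0)]
    -- columns decrease by at most one
    have hcolY : ∀ d, colW μX d ≤ colW μY d + 1 := by
      intro d
      unfold colW
      have hpt : ∀ x ∈ Finset.univ.erase d,
          μX x d ≤ μY x d + (if x = c ∧ d = c' then 1 else 0) := by
        intro x _
        by_cases hB : x = c ∧ d = c'
        · rw [hB.1, hB.2, hYval2, if_pos (show c = c ∧ c' = c' from ⟨rfl, rfl⟩)]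
          omega
        · rw [if_neg hB]
          by_cases hA : x = w ∧ d = c0
          · rw [hA.1, hA.2, hYval1]; omega
          · rw [hYother x d hA hB]
            omega
      calc ∑ x ∈ Finset.univ.erase d, μX x d
          ≤ ∑ x ∈ Finset.univ.erase d, (μY x d + (if x = c ∧ d = c' then 1 else 0)) :=
            Finset.sum_le_sum hpt
        _ = (∑ x ∈ Finset.univ.erase d, μY x d)
              + ∑ x ∈ Finset.univ.erase d, (if x = c ∧ d = c' then 1 else 0) :=
            Finset.sum_add_distrib
        _ ≤ (∑ x ∈ Finset.univ.erase d, μY x d) + 1 := by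
            gcongr
            calc ∑ x ∈ Finset.univ.erase d, (if x = c ∧ d = c' then 1 else 0)
                ≤ ∑ x ∈ Finset.univ.erase d, (if x = c then 1 else 0) := by
                  refine Finset.sum_le_sum fun x _ => ?_
                  by_cases hxc : x = c ∧ d = c'
                  · rw [if_pos hxc, if_pos hxc.1]
                  · rw [if_neg hxc]
                    exact Nat.zero_le _
              _ ≤ 1 := by
                  rw [Finset.sum_ite_eq' (Finset.univ.erase d) c (fun _ => 1)]
                  split_ifs <;> omega
    have hYP : P μY := by
      refine ⟨hYext, fun d hdw => ?_⟩
      have h0 := hXnwb' d hdw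
      have h1 := hcolY d
      rw [hbY]
      omega
    -- size is preserved : μY + B = μX + A pointwise
    have hptsz : ∀ x y : C, μY x y + (if x = c ∧ y = c' then 1 else 0)
        = μX x y + (if x = w ∧ y = c0 then 1 else 0) := by
      intro x y
      by_cases hA : x = w ∧ y = c0
      · rw [hA.1, hA.2, hYval1,
          if_neg (show ¬(w = c ∧ c0 = c') from fun hh => hcw hh.1.symm),
          if_pos (show w = w ∧ c0 = c0 from ⟨rfl, rfl⟩)]
      · by_cases hB : x = c ∧ y = c'
        · rw [hB.1, hB.2, hYval2, if_neg hne1,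
            if_pos (show c = c ∧ c' = c' from ⟨rfl, rfl⟩)]
          omega
        · rw [hYother x y hA hB, if_neg hA, if_neg hB]
    have hinner : ∀ (a b x : C), (∑ y : C, (if x = a ∧ y = b then (1:ℕ) else 0))
        = if x = a then 1 else 0 := by
      intro a b x
      by_cases hx : x = a
      · simp [hx]
      · simp [hx]
    have hsum_ind : ∀ (a b : C), (∑ x : C, ∑ y : C, (if x = a ∧ y = b then 1 else 0)) = 1 := by
      intro a b
      rw [Finset.sum_congr rfl fun x _ => hinner a b x]
      simp
    have hszY : sizeW μY = sizeW μX := by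
      have h1 : sizeW μY + (∑ x : C, ∑ y : C, (if x = c ∧ y = c' then (1:ℕ) else 0))
          = sizeW μX + (∑ x : C, ∑ y : C, (if x = w ∧ y = c0 then (1:ℕ) else 0)) := by
        unfold sizeW
        rw [← Finset.sum_add_distrib, ← Finset.sum_add_distrib]
        refine Finset.sum_congr rfl fun x _ => ?_
        rw [← Finset.sum_add_distrib, ← Finset.sum_add_distrib]
        exact Finset.sum_congr rfl fun y _ => hptsz x y
      rw [hsum_ind c c', hsum_ind w c0] at h1
      omega
    -- R decreases by one
    have hRY : R μY + 1 = R μX := by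
      rw [hR]
      dsimp only
      have h1 : (∑ x ∈ Finset.univ.erase w, ∑ y : C, μY x y)
            + (∑ x ∈ Finset.univ.erase w, ∑ y : C, (if x = c ∧ y = c' then (1:ℕ) else 0))
          = ∑ x ∈ Finset.univ.erase w, ∑ y : C, μX x y := by
        rw [← Finset.sum_add_distrib]
        refine Finset.sum_congr rfl fun x hx => ?_
        rw [← Finset.sum_add_distrib]
        refine Finset.sum_congr rfl fun y _ => ?_
        have := hptsz x y
        rw [if_neg (fun hh : x = w ∧ y = c0 => (Finset.ne_of_mem_erase hx) hh.1)] at this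
        omega
      have h2 : (∑ x ∈ Finset.univ.erase w, ∑ y : C, (if x = c ∧ y = c' then (1:ℕ) else 0)) = 1 := by
        have hcmem : c ∈ Finset.univ.erase w := Finset.mem_erase.mpr ⟨hcw, Finset.mem_univ c⟩
        rw [Finset.sum_congr rfl fun x _ => hinner c c' x,
          Finset.sum_ite_eq' (Finset.univ.erase w) c (fun _ => (1:ℕ)), if_pos hcmem]
      omega
    have : sInf T ≤ R μY :=
      Nat.sInf_le (show R μY ∈ T from ⟨μY, hYP, hszY.trans hsX, rfl⟩)
    omega
end
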